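/- arXiv:math/0610294 — 3 statements merged into one kernel-verified Lean document; each statement's English description precedes it below -/
import Mathlib

section
/- If G is a finite p-group, then the group of automorphisms of G inducing the identity on G/Φ(G) is itself a p-group. -/
open Subgroup SemidirectProduct

/-- The subgroup of `MulAut G` of automorphisms inducing the identity on `G ⧸ frattini G`. -/
def frattiniFixer (G : Type*) [Group G] : Subgroup (MulAut G) where
  carrier := {ψ : MulAut G | ∀ g : G, g⁻¹ * ψ g ∈ frattini G}
  one_mem' := fun g => by simpa using one_mem _
  mul_mem' := by
    intro a b ha hb g
    have : g⁻¹ * (a * b) g = (g⁻¹ * b g) * ((b g)⁻¹ * a (b g)) := by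
      simp [mul_assoc]
    rw [this]
    exact mul_mem (hb g) (ha (b g))
  inv_mem' := by
    intro a ha g
    have h := ha (a⁻¹ g)
    rw [show a (a⁻¹ g) = g by simp] at h
    have h2 := inv_mem h
    rwa [mul_inv_rev, inv_inv] at h2

lemma frattini_fixer_key {p : ℕ} [Fact p.Prime] {G : Type*} [Group G] [Finite G]
    (hG : IsPGroup p G) (χ : MulAut G) (hχ : χ ∈ frattiniFixer G)
    {q : ℕ} (hq : q.Prime) (hne : q ≠ p) (hord : orderOf χ = q) : False := by
  haveI : Fact q.Prime := ⟨hq⟩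
  set C : Subgroup (MulAut G) := Subgroup.zpowers χ with hC
  set H := G ⋊[C.subtype] C with hH
  let e : G × C ≃ H :=
    { toFun := fun x => ⟨x.1, x.2⟩
      invFun := fun h => (h.left, h.right)
      left_inv := fun x => rfl
      right_inv := fun h => rfl }
  haveI : Finite H := Finite.of_equiv _ e
  have hCfix : ∀ c : C, (c : MulAut G) ∈ frattiniFixer G := fun c =>
    (Subgroup.zpowers_le.mpr hχ) c.2
  have hmem : ∀ (c : C) (f : G), f ∈ frattini G → (c : MulAut G) f ∈ frattini G := by
    intro c f hf
    have h := hCfix c f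
    have : (c : MulAut G) f = f * (f⁻¹ * (c : MulAut G) f) := by
      rw [mul_inv_cancel_left]
    rw [this]
    exact mul_mem hf h
  have hmul : ∀ (c : C) (a : G), a * ((c : MulAut G) a)⁻¹ ∈ frattini G := by
    intro c a
    have h := inv_mem (hCfix c a)
    rw [mul_inv_rev, inv_inv] at h
    -- h : (c a)⁻¹ * a ∈ frattini G
    have := (frattini G).normal_of_characteristic.conj_mem _ h a
    rwa [show a * (((c : MulAut G) a)⁻¹ * a) * a⁻¹ = a * ((c : MulAut G) a)⁻¹ by group] at this
  -- the normal subgroup N = Φ(G) ⋊ C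
  let N : Subgroup H :=
    { carrier := {h : H | h.left ∈ frattini G}
      one_mem' := by simpa using one_mem _
      mul_mem' := by
        intro a b ha hb
        show (a * b).left ∈ frattini G
        rw [mul_left]
        exact mul_mem ha (hmem _ _ hb)
      inv_mem' := by
        intro a ha
        show a⁻¹.left ∈ frattini G
        rw [inv_left]
        exact hmem a.right⁻¹ a.left⁻¹ (inv_mem ha) }
  haveI hNnormal : N.Normal := by
    constructor
    intro n hn h
    show (h * n * h⁻¹).left ∈ frattini G
    have hnl : n.left ∈ frattini G := hn
    rw [mul_left, mul_left, inv_left, mul_right]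
    have h1 : (C.subtype (h.right * n.right)) ((C.subtype h.right⁻¹) h.left⁻¹)
        = (((h.right * n.right * h.right⁻¹ : C) : MulAut G) h.left)⁻¹ := by
      have hcomm : h.right * n.right * h.right⁻¹ = n.right := by
        rw [mul_comm' h.right n.right, mul_inv_cancel_right]
      rw [hcomm, ← map_inv, mul_comm' h.right n.right]
      simp [MulAut.mul_apply]
    rw [h1]
    have h2 : h.left * (C.subtype h.right) n.left
          * ((((h.right * n.right * h.right⁻¹ : C) : MulAut G)) h.left)⁻¹
        = (h.left * (C.subtype h.right) n.left * h.left⁻¹)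
          * (h.left * ((((h.right * n.right * h.right⁻¹ : C) : MulAut G)) h.left)⁻¹) := by
      group
    rw [h2]
    exact mul_mem
      ((frattini G).normal_of_characteristic.conj_mem _ (hmem h.right n.left hnl) h.left)
      (hmul _ h.left)
  -- cardinalities
  have hcardH : Nat.card H = Nat.card G * q := by
    rw [← Nat.card_congr e, Nat.card_prod, Nat.card_zpowers, hord]
  obtain ⟨nn, hnn⟩ := IsPGroup.iff_card.mp hG
  have hqG : ¬ q ∣ Nat.card G := by
    rw [hnn]
    intro hdvd
    exact hne ((Nat.prime_dvd_prime_iff_eq hq Fact.out).mp (hq.dvd_of_dvd_pow hdvd))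
  set w : H := inr (⟨χ, Subgroup.mem_zpowers χ⟩ : C) with hw
  set Q : Subgroup H := Subgroup.zpowers w with hQdef
  have hordw : orderOf w = q := by
    have h1 := orderOf_injective (inr : C →* H) inr_injective ⟨χ, Subgroup.mem_zpowers χ⟩
    have h2 := orderOf_injective C.subtype (Subgroup.subtype_injective C)
      ⟨χ, Subgroup.mem_zpowers χ⟩
    rw [hw, h1, ← h2]
    exact hord
  have hcardQ : Nat.card Q = q := by rw [hQdef, Nat.card_zpowers, hordw]
  have hQpgroup : IsPGroup q Q := IsPGroup.of_card (by rw [hcardQ, pow_one])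
  have hmax : ∀ {R : Subgroup H}, IsPGroup q R → Q ≤ R → R = Q := by
    intro R hR hQR
    obtain ⟨kk, hkk⟩ := IsPGroup.iff_card.mp hR
    have hdvd : Nat.card R ∣ Nat.card H := Subgroup.card_subgroup_dvd_card R
    rw [hcardH, hkk] at hdvd
    have hcop : Nat.Coprime (q ^ kk) (Nat.card G) :=
      Nat.Coprime.pow_left _ (hq.coprime_iff_not_dvd.mpr hqG)
    have hqk : q ^ kk ∣ q := hcop.dvd_of_dvd_mul_left hdvd
    refine (Subgroup.eq_of_le_of_card_ge hQR ?_).symm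
    rw [hkk, hcardQ]
    exact Nat.le_of_dvd hq.pos hqk
  let P : Sylow q H := ⟨Q, hQpgroup, hmax⟩
  have hQN : (P : Subgroup H) ≤ N := by
    show Q ≤ N
    rw [hQdef]
    refine Subgroup.zpowers_le.mpr ?_
    show w.left ∈ frattini G
    rw [hw, left_inr]
    exact one_mem _
  haveI : Finite (Sylow q H) :=
    Finite.of_injective (fun S : Sylow q H => (S : Subgroup H))
      (fun S T h => Sylow.ext h)
  have htop := Sylow.normalizer_sup_eq_top' P hQN
  set K : Subgroup G := Subgroup.comap (inl : G →* H) (Subgroup.normalizer ((P : Subgroup H) : Set H)) with hK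
  have hKsup : K ⊔ frattini G = ⊤ := by
    rw [eq_top_iff]
    intro g _
    have hg : (inl g : H) ∈ Subgroup.normalizer ((P : Subgroup H) : Set H) ⊔ N := htop ▸ Subgroup.mem_top _
    rw [← SetLike.mem_coe, Subgroup.mul_normal] at hg
    obtain ⟨x, hx, y, hy, hxy⟩ := hg
    have hyl : y.left ∈ frattini G := hy
    have hyr : (inr y.right : H) ∈ (P : Subgroup H) := by
      obtain ⟨i, hi⟩ := Subgroup.mem_zpowers_iff.mp y.right.2
      show inr y.right ∈ Q
      rw [hQdef, Subgroup.mem_zpowers_iff]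
      refine ⟨i, ?_⟩
      rw [hw, ← map_zpow]
      exact congrArg inr (Subtype.ext (by simpa using hi))
    have hx2 : x * inr y.right ∈ Subgroup.normalizer ((P : Subgroup H) : Set H) :=
      mul_mem hx (Subgroup.le_normalizer hyr)
    have hz : x * inr y.right = inl (g * (((y.right⁻¹ : C) : MulAut G)) y.left⁻¹) := by
      have hxval : x = inl g * y⁻¹ := by rw [← hxy, mul_inv_cancel_right]
      rw [hxval]
      ext
      · simp
      · simp
    have hmemK : g * (((y.right⁻¹ : C) : MulAut G)) y.left⁻¹ ∈ K := by
      rw [hK, Subgroup.mem_comap]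
      exact hz ▸ hx2
    have hf : ((((y.right⁻¹ : C) : MulAut G)) y.left⁻¹)⁻¹ ∈ frattini G :=
      inv_mem (hmem _ _ (inv_mem hyl))
    have hgeq : g = (g * (((y.right⁻¹ : C) : MulAut G)) y.left⁻¹)
        * ((((y.right⁻¹ : C) : MulAut G)) y.left⁻¹)⁻¹ := by group
    rw [hgeq]
    exact mul_mem (Subgroup.mem_sup_left hmemK) (Subgroup.mem_sup_right hf)
  haveI : Finite (Subgroup G) :=
    Finite.of_injective (fun S : Subgroup G => (S : Set G)) SetLike.coe_injective
  haveI : IsCoatomic (Subgroup G) := isCoatomic_of_orderTop_gt_wellFounded wellFounded_gt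
  have hKtop : K = ⊤ := frattini_nongenerating hKsup
  have hχ1 : χ = 1 := by
    refine MulEquiv.ext fun g => ?_
    have hgK : (g⁻¹ : G) ∈ K := hKtop ▸ Subgroup.mem_top _
    rw [hK, Subgroup.mem_comap] at hgK
    have hconj : inl g⁻¹ * w * (inl g⁻¹)⁻¹ ∈ Q :=
      (Subgroup.mem_normalizer_iff.mp hgK w).mp (Subgroup.mem_zpowers w)
    obtain ⟨i, hi⟩ := Subgroup.mem_zpowers_iff.mp hconj
    have hleft : (inl g⁻¹ * w * (inl g⁻¹)⁻¹).left = g⁻¹ * χ g := by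
      rw [hw]
      simp [-map_inv]
      rw [show (inl g⁻¹ * inr (⟨χ, Subgroup.mem_zpowers χ⟩ : C) : H)
          = ⟨g⁻¹, ⟨χ, Subgroup.mem_zpowers χ⟩⟩ from
        SemidirectProduct.ext (by rw [mul_left, left_inl, left_inr, right_inl]; simp)
          (by rw [mul_right, right_inl, one_mul, right_inr])]
    have h1 : (w ^ i).left = 1 := by rw [hw, ← map_zpow, left_inr]
    rw [hi, hleft] at h1
    rw [show (1 : MulAut G) g = g from rfl]
    exact (inv_mul_eq_one.mp h1).symm
  rw [hχ1, orderOf_one] at hord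
  exact hq.one_lt.ne' hord.symm


/-- If `G` is a finite `p`-group, then the automorphisms of `G` inducing the identity on
`G ⧸ Φ(G)` (i.e. `g⁻¹ * φ g ∈ frattini G` for all `g`) form a `p`-group: every such
automorphism has `p`-power order. -/
theorem frattini_automorphisms_isPGroup (p : ℕ) [Fact p.Prime] (G : Type*) [Group G] [Finite G]
    (hG : IsPGroup p G) (φ : MulAut G) (hφ : ∀ g : G, g⁻¹ * φ g ∈ frattini G) :
    ∃ k : ℕ, φ ^ (p ^ k) = 1 := by
  haveI : Finite (MulAut G) :=
    Finite.of_injective (fun ψ => (ψ : G → G)) DFunLike.coe_injective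
  have hφ' : φ ∈ frattiniFixer G := hφ
  set n := orderOf φ with hn
  have hn0 : n ≠ 0 := (orderOf_pos φ).ne'
  set k := n.factorization p with hk
  refine ⟨k, ?_⟩
  set m := ordCompl[p] n with hm
  have hψord : orderOf (φ ^ p ^ k) = m := by
    rw [orderOf_pow, ← hn, Nat.gcd_eq_right (Nat.ordProj_dvd n p)]
  have hm0 : m ≠ 0 := (Nat.ordCompl_pos p hn0).ne'
  have hm1 : m = 1 := by
    by_contra hm1
    obtain ⟨q, hq, hqm⟩ := Nat.exists_prime_and_dvd hm1
    have hqp : q ≠ p := by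
      intro h
      subst h
      exact (Nat.Prime.coprime_iff_not_dvd Fact.out).mp (Nat.coprime_ordCompl Fact.out hn0) hqm
    have hχord : orderOf ((φ ^ p ^ k) ^ (m / q)) = q := by
      rw [orderOf_pow, hψord, Nat.gcd_eq_right (Nat.div_dvd_of_dvd hqm),
        Nat.div_div_self hqm hm0]
    exact frattini_fixer_key hG _ (pow_mem (pow_mem hφ' _) _) hq hqp hχord
  rw [← orderOf_eq_one_iff, hψord, hm1]
end

section
/- If G is an extraspecial p-group, then the subgroup H of Aut(G) consisting of automorphisms acting trivially on Z(G) is normal in Aut(G), and Aut(G)/H is cyclic of order p−1. -/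
/-- A finite `p`-group is extraspecial if its center, commutator subgroup and Frattini
subgroup coincide and have order `p`. -/
def IsExtraspecial (p : ℕ) (G : Type*) [Group G] : Prop :=
  IsPGroup p G ∧ Subgroup.center G = commutator G ∧ Subgroup.center G = frattini G ∧
    Nat.card (Subgroup.center G) = p


open Subgroup
open scoped commutatorElement

section Helpers

variable {G : Type*} [Group G]

lemma comm_mul_right {x y w : G} (h : ⁅x, w⁆ ∈ Subgroup.center G) :
    ⁅x, y * w⁆ = ⁅x, y⁆ * ⁅x, w⁆ := by
  have h1 : ⁅x, y * w⁆ = ⁅x, y⁆ * (y * ⁅x, w⁆ * y⁻¹) := by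
    simp only [commutatorElement_def]; group
  rw [h1, Subgroup.mem_center_iff.mp h y]
  group

lemma conj_zpow' (x y : G) (n : ℤ) : x * y ^ n * x⁻¹ = (x * y * x⁻¹) ^ n := by
  have h := map_zpow (MulAut.conj x) y n
  simp only [MulAut.conj_apply] at h
  exact h

lemma comm_zpow_right {x y : G} (h : ⁅x, y⁆ ∈ Subgroup.center G) (n : ℤ) :
    ⁅x, y ^ n⁆ = ⁅x, y⁆ ^ n := by
  have hcomm : Commute ⁅x, y⁆ y := (Subgroup.mem_center_iff.mp h y).symm
  have h1 : x * y * x⁻¹ = ⁅x, y⁆ * y := by simp only [commutatorElement_def]; group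
  have h2 : x * y ^ n * x⁻¹ = ⁅x, y⁆ ^ n * y ^ n := by
    rw [conj_zpow' x y n, h1, hcomm.mul_zpow]
  have h3 : ⁅x, y ^ n⁆ = (x * y ^ n * x⁻¹) * (y ^ n)⁻¹ := by
    rw [commutatorElement_def]
  rw [h3, h2]
  group

/-- class-2 power formula -/
lemma mul_pow_central {x y c : G} (hc : y * x = x * y * c)
    (hcc : c ∈ Subgroup.center G) (n : ℕ) :
    (x * y) ^ n = x ^ n * y ^ n * c ^ (n.choose 2) := by
  have hcent : ∀ g : G, c * g = g * c := fun g => (Subgroup.mem_center_iff.mp hcc g).symm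
  have hcentp : ∀ (m : ℕ) (g : G), c ^ m * g = g * c ^ m := fun m g =>
    (Subgroup.mem_center_iff.mp (pow_mem hcc m) g).symm
  have aux : ∀ m : ℕ, y ^ m * x = x * y ^ m * c ^ m := by
    intro m
    induction m with
    | zero => simp
    | succ m ih =>
      calc y ^ (m+1) * x = y * (y ^ m * x) := by rw [pow_succ']; group
        _ = y * (x * y ^ m * c ^ m) := by rw [ih]
        _ = (y * x) * y ^ m * c ^ m := by group
        _ = (x * y * c) * y ^ m * c ^ m := by rw [hc]
        _ = x * y * (c * y ^ m) * c ^ m := by group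
        _ = x * y * (y ^ m * c) * c ^ m := by rw [hcent (y ^ m)]
        _ = x * (y * y ^ m) * (c * c ^ m) := by group
        _ = x * y ^ (m+1) * c ^ (m+1) := by rw [← pow_succ', ← pow_succ']
  induction n with
  | zero => simp
  | succ n ih =>
    have hch : (n+1).choose 2 = n.choose 2 + n := by
      rw [Nat.choose_succ_succ]
      simp [Nat.choose_one_right, Nat.add_comm]
    calc (x*y)^(n+1) = (x*y)^n * (x*y) := pow_succ _ _
      _ = x ^ n * y ^ n * c ^ n.choose 2 * (x * y) := by rw [ih]
      _ = x ^ n * y ^ n * (c ^ n.choose 2 * x) * y := by group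
      _ = x ^ n * y ^ n * (x * c ^ n.choose 2) * y := by rw [hcentp (n.choose 2) x]
      _ = x ^ n * (y ^ n * x) * (c ^ n.choose 2 * y) := by group
      _ = x ^ n * (y ^ n * x) * (y * c ^ n.choose 2) := by rw [hcentp (n.choose 2) y]
      _ = x ^ n * (x * y ^ n * c ^ n) * (y * c ^ n.choose 2) := by rw [aux n]
      _ = (x ^ n * x) * y ^ n * (c ^ n * y) * c ^ n.choose 2 := by group
      _ = (x ^ n * x) * y ^ n * (y * c ^ n) * c ^ n.choose 2 := by rw [hcentp n y]
      _ = (x ^ n * x) * (y ^ n * y) * (c ^ n * c ^ n.choose 2) := by group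
      _ = x ^ (n+1) * y ^ (n+1) * c ^ ((n+1).choose 2) := by
          rw [← pow_succ, ← pow_succ, ← pow_add, hch, Nat.add_comm n (n.choose 2)]

end Helpers

section Base

lemma base_aut {p : ℕ} [Fact p.Prime] {E : Type*} [Group E] [Finite E]
    {a b z : E} (hzab : ⁅a, b⁆ = z) (hzc : z ∈ Subgroup.center E) (hz1 : z ≠ 1)
    (hzp : z ^ p = 1) (hap : a ^ (p * p) = 1) (hbp : b ^ p = 1)
    (htop : Subgroup.closure ({a, b} : Set E) = ⊤) {k : ℤ} (hk : ¬((p : ℤ) ∣ k)) :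
    ∃ φ : MulAut E, ∀ w ∈ Subgroup.zpowers z, φ w = w ^ k := by
  classical
  set A : Subgroup E := Subgroup.closure ({a, z} : Set E) with hA_def
  have haA : a ∈ A := Subgroup.subset_closure (by simp)
  have hzA : z ∈ A := Subgroup.subset_closure (by simp)
  have hcent : ∀ g : E, Commute g z := fun g => Subgroup.mem_center_iff.mp hzc g
  -- A is abelian
  have hcomm_a : ∀ y ∈ A, Commute a y := by
    intro y hy
    induction hy using Subgroup.closure_induction with
    | mem x hx =>
      simp only [Set.mem_insert_iff, Set.mem_singleton_iff] at hx
      rcases hx with rfl | rfl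
      · exact Commute.refl x
      · exact hcent a
    | one => exact Commute.one_right a
    | mul x y hx hy ihx ihy => exact ihx.mul_right ihy
    | inv x hx ihx => exact ihx.inv_right
  have hA : ∀ x ∈ A, ∀ y ∈ A, Commute x y := by
    intro x hx
    induction hx using Subgroup.closure_induction with
    | mem w hw =>
      intro y hy
      simp only [Set.mem_insert_iff, Set.mem_singleton_iff] at hw
      rcases hw with rfl | rfl
      · exact hcomm_a y hy
      · exact (hcent y).symm
    | one => intro y hy; exact Commute.one_left y
    | mul u v hu hv ihu ihv => intro y hy; exact (ihu y hy).mul_left (ihv y hy)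
    | inv u hu ihu => intro y hy; exact (ihu y hy).inv_left
  have hApow : ∀ x ∈ A, x ^ (p * p) = 1 := by
    intro x hx
    induction hx using Subgroup.closure_induction with
    | mem w hw =>
      simp only [Set.mem_insert_iff, Set.mem_singleton_iff] at hw
      rcases hw with rfl | rfl
      · exact hap
      · rw [pow_mul, hzp, one_pow]
    | one => exact one_pow _
    | mul u v hu hv ihu ihv =>
      rw [(hA u hu v hv).mul_pow, ihu, ihv, one_mul]
    | inv u hu ihu => rw [inv_pow, ihu, inv_one]
  -- A is normal
  have hba : b * a * b⁻¹ = z⁻¹ * a := by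
    have : ⁅b, a⁆ = z⁻¹ := by rw [← commutatorElement_inv, hzab]
    rw [← this]; simp only [commutatorElement_def]; group
  have hba' : b⁻¹ * a * b = z * a := by
    have h0 : a * b = z * (b * a) := by rw [← hzab]; simp only [commutatorElement_def]; group
    have h1 : z * (b * a) = b * (z * a) := by
      rw [← mul_assoc, ← (hcent b).eq, mul_assoc]
    calc b⁻¹ * a * b = b⁻¹ * (a * b) := by group
      _ = b⁻¹ * (b * (z * a)) := by rw [h0, h1]
      _ = z * a := by group
  have hconjmem : ∀ g : E, g * a * g⁻¹ ∈ A → (∀ x ∈ A, g * x * g⁻¹ ∈ A) := by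
    intro g hga x hx
    induction hx using Subgroup.closure_induction with
    | mem w hw =>
      simp only [Set.mem_insert_iff, Set.mem_singleton_iff] at hw
      rcases hw with rfl | rfl
      · exact hga
      · have : g * w * g⁻¹ = w := by rw [(hcent g).eq]; group
        rw [this]; exact hzA
    | one =>
      have : g * 1 * g⁻¹ = 1 := by group
      rw [this]; exact one_mem A
    | mul u v hu hv ihu ihv =>
      have : g * (u * v) * g⁻¹ = (g * u * g⁻¹) * (g * v * g⁻¹) := by group
      rw [this]; exact mul_mem ihu ihv
    | inv u hu ihu =>
      have : g * u⁻¹ * g⁻¹ = (g * u * g⁻¹)⁻¹ := by group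
      rw [this]; exact inv_mem ihu
  have hnormal : A.Normal := by
    rw [← Subgroup.normalizer_eq_top_iff]
    rw [eq_top_iff, ← htop, Subgroup.closure_le]
    rintro x hx
    simp only [Set.mem_insert_iff, Set.mem_singleton_iff] at hx
    rcases hx with rfl | rfl
    · exact Subgroup.le_normalizer haA
    · rw [SetLike.mem_coe, Subgroup.mem_normalizer_iff]
      intro h
      constructor
      · intro hh
        exact hconjmem x (by rw [hba]; exact mul_mem (inv_mem hzA) haA) h hh
      · intro hh
        have hmem2 : x⁻¹ * a * x⁻¹⁻¹ ∈ A := by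
          rw [inv_inv, hba']; exact mul_mem hzA haA
        have h5 := hconjmem x⁻¹ hmem2 _ hh
        have h4 : x⁻¹ * (x * h * x⁻¹) * x⁻¹⁻¹ = h := by group
        rwa [h4] at h5
  haveI := hnormal
  set K : Subgroup E := Subgroup.zpowers b with hK_def
  have hbK : b ∈ K := Subgroup.mem_zpowers b
  set φc : ↥K →* MulAut ↥A := MulAut.conjNormal.comp K.subtype with hφc_def
  have hcompat : ∀ g : ↥K, A.subtype.comp (φc g).toMonoidHom
      = (MulAut.conj (K.subtype g)).toMonoidHom.comp A.subtype := by
    intro g; ext h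
    simp [hφc_def, MulAut.conj_apply]
  set Pr : (↥A ⋊[φc] ↥K) →* E := SemidirectProduct.lift A.subtype K.subtype hcompat with hPr_def
  have hPrapp : ∀ s : ↥A ⋊[φc] ↥K, Pr s = (s.left : E) * (s.right : E) := fun s => rfl
  have hord : orderOf z = p := orderOf_eq_prime hzp hz1
  -- auxiliary conjugation formula
  have habj : ∀ n : ℤ, a * b ^ n * a⁻¹ = z ^ n * b ^ n := by
    intro n
    have h1 : a * b * a⁻¹ = z * b := by
      rw [← hzab]; simp only [commutatorElement_def]; group
    rw [conj_zpow' a b n, h1, ((hcent b).symm.mul_zpow n)]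
  have hPrinj : Function.Injective Pr := by
    rw [injective_iff_map_eq_one]
    intro s hs
    rw [hPrapp] at hs
    obtain ⟨j, hj⟩ := Subgroup.mem_zpowers_iff.mp s.right.2
    have hmem : (s.right : E) ∈ A := by
      have hinv : ((s.left : E))⁻¹ = (s.right : E) := mul_eq_one_iff_inv_eq.mp hs
      rw [← hinv]; exact inv_mem s.left.2
    have hcomm : Commute a (b ^ j) := by
      rw [hj]; exact hA a haA _ hmem
    have hzj : z ^ j = 1 := by
      have h2 : a * b ^ j * a⁻¹ = b ^ j := by rw [hcomm.eq]; group
      have h3 : z ^ j * b ^ j = b ^ j := by rw [← habj j, h2]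
      exact mul_right_cancel (by rw [one_mul]; exact h3)
    have hpj : (p : ℤ) ∣ j := by
      have := orderOf_dvd_iff_zpow_eq_one.mpr hzj
      rwa [hord] at this
    obtain ⟨m, rfl⟩ := hpj
    have hbj : b ^ ((p : ℤ) * m) = 1 := by
      rw [zpow_mul, zpow_natCast, hbp, one_zpow]
    have hr : s.right = 1 := by
      apply Subtype.ext; rw [← hj, hbj]; rfl
    have hl : s.left = 1 := by
      apply Subtype.ext
      have h6 := hs
      rw [hr] at h6
      simpa using h6
    ext
    · simp [hl]
    · simp [hr]
  have hPrsurj : Function.Surjective Pr := by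
    have hr : Subgroup.closure ({a, b} : Set E) ≤ Pr.range := by
      rw [Subgroup.closure_le]
      rintro x (rfl | hx)
      · exact ⟨SemidirectProduct.inl ⟨x, haA⟩, by rw [hPr_def, SemidirectProduct.lift_inl]; rfl⟩
      · simp only [Set.mem_singleton_iff] at hx; subst hx
        exact ⟨SemidirectProduct.inr ⟨x, hbK⟩, by rw [hPr_def, SemidirectProduct.lift_inr]; rfl⟩
    intro x
    have : x ∈ Pr.range := hr (htop ▸ Subgroup.mem_top x)
    exact this
  set PrE : (↥A ⋊[φc] ↥K) ≃* E := MulEquiv.ofBijective Pr ⟨hPrinj, hPrsurj⟩ with hPrE_def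
  -- the power map on A
  set powk : ↥A →* ↥A :=
    { toFun := fun x => x ^ k
      map_one' := one_zpow k
      map_mul' := fun x y =>
        (show Commute x y from Subtype.ext (hA _ x.2 _ y.2)).mul_zpow k } with hpowk_def
  have hcompat2 : ∀ g : ↥K, (A.subtype.comp powk).comp (φc g).toMonoidHom
      = (MulAut.conj (K.subtype g)).toMonoidHom.comp (A.subtype.comp powk) := by
    intro g; ext h
    show A.subtype (powk ((φc g) h)) = MulAut.conj (K.subtype g) (A.subtype (powk h))
    have h1 := map_zpow (MulAut.conj ((g : E))) (h : E) k
    simp only [MulAut.conj_apply] at h1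
    show ((((φc g) h : ↥A) : E)) ^ k = MulAut.conj ((g : E)) (((h : ↥A) : E) ^ k)
    have h2 : (((φc g) h : ↥A) : E) = (g : E) * (h : E) * (g : E)⁻¹ :=
      MulAut.conjNormal_apply _ _
    rw [MulAut.conj_apply, h2]
    exact h1.symm
  set Ψ : (↥A ⋊[φc] ↥K) →* E := SemidirectProduct.lift (A.subtype.comp powk) K.subtype hcompat2
    with hΨ_def
  -- coprimality
  have hprime : Prime ((p : ℤ)) := Nat.prime_iff_prime_int.mp Fact.out
  have hcop : IsCoprime ((p : ℤ) ^ 2) k := (hprime.coprime_iff_not_dvd.mpr hk).pow_left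
  obtain ⟨v, u, huv⟩ := hcop
  have hxk : ∀ x : ↥A, (x ^ u) ^ k = x := by
    intro x
    have hx1 : x ^ ((p : ℤ) ^ 2) = 1 := by
      have : (x : E) ^ (p * p) = 1 := hApow _ x.2
      apply Subtype.ext
      push_cast
      rw [show ((p : ℤ) ^ 2) = ((p * p : ℕ) : ℤ) by push_cast; ring, zpow_natCast]
      exact_mod_cast this
    calc (x ^ u) ^ k = x ^ (u * k) := by rw [← zpow_mul]
      _ = x ^ (u * k) * (x ^ ((p:ℤ)^2)) ^ v := by rw [hx1, one_zpow, mul_one]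
      _ = x ^ (u * k + (p:ℤ)^2 * v) := by rw [← zpow_mul, ← zpow_add]
      _ = x ^ (1 : ℤ) := by
          congr 1
          have : v * (p:ℤ)^2 + u * k = 1 := huv
          linarith
      _ = x := zpow_one x
  have hΨsurj : Function.Surjective Ψ := by
    have hr : Subgroup.closure ({a, b} : Set E) ≤ Ψ.range := by
      rw [Subgroup.closure_le]
      rintro x (rfl | hx)
      · refine ⟨SemidirectProduct.inl ((⟨x, haA⟩ : ↥A) ^ u), ?_⟩
        rw [hΨ_def, SemidirectProduct.lift_inl]
        have := hxk (⟨x, haA⟩ : ↥A)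
        simp only [MonoidHom.comp_apply]
        show A.subtype (powk ((⟨x, haA⟩ : ↥A) ^ u)) = x
        show ((((⟨x, haA⟩ : ↥A) ^ u) ^ k : ↥A) : E) = x
        rw [this]
      · simp only [Set.mem_singleton_iff] at hx; subst hx
        exact ⟨SemidirectProduct.inr ⟨x, hbK⟩, by rw [hΨ_def, SemidirectProduct.lift_inr]; rfl⟩
    intro x
    exact hr (htop ▸ Subgroup.mem_top x)
  set Φ₀ : E →* E := Ψ.comp PrE.symm.toMonoidHom with hΦ₀_def
  have hΦ₀surj : Function.Surjective Φ₀ := hΨsurj.comp PrE.symm.surjective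
  have hΦ₀bij : Function.Bijective Φ₀ := ⟨Finite.injective_iff_surjective.mpr hΦ₀surj, hΦ₀surj⟩
  refine ⟨MulEquiv.ofBijective Φ₀ hΦ₀bij, ?_⟩
  intro w hw
  obtain ⟨j, rfl⟩ := Subgroup.mem_zpowers_iff.mp hw
  have hwA : z ^ j ∈ A := Subgroup.zpow_mem A hzA j
  have hcoe : ∀ s, PrE s = Pr s := fun s => rfl
  have hsymm : PrE.symm (z ^ j) = SemidirectProduct.inl (⟨z ^ j, hwA⟩ : ↥A) := by
    rw [MulEquiv.symm_apply_eq, hcoe]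
    exact (show Pr (SemidirectProduct.inl (⟨z ^ j, hwA⟩ : ↥A)) = z ^ j by
      rw [hPr_def, SemidirectProduct.lift_inl]; rfl).symm
  show Ψ (PrE.symm (z ^ j)) = (z ^ j) ^ k
  rw [hsymm, hΨ_def, SemidirectProduct.lift_inl]
  simp only [MonoidHom.comp_apply]
  rfl

end Base

lemma pow_p_mem_frattini {p : ℕ} [Fact p.Prime] {G : Type*} [Group G] [Finite G]
    (hG : IsPGroup p G) (x : G) : x ^ p ∈ frattini G := by
  have hnil : Group.IsNilpotent G := hG.isNilpotent
  have : frattini G = ⨅ (K : Subgroup G) (_ : IsCoatom K), K := rfl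
  rw [this]
  simp only [Subgroup.mem_iInf]
  intro K hK
  haveI hnorm : K.Normal :=
    NormalizerCondition.normal_of_coatom K (normalizerCondition_of_isNilpotent) hK
  -- the quotient G/K has order p
  obtain ⟨g, hg⟩ : ∃ g : G, g ∉ K := by
    by_contra h
    push_neg at h
    exact hK.1 ((Subgroup.eq_top_iff' K).mpr h)
  have hQp : IsPGroup p (G ⧸ K) := hG.to_quotient K
  have hgne : (g : G ⧸ K) ≠ 1 := fun h => hg ((QuotientGroup.eq_one_iff g).mp h)
  -- find an element of order p
  obtain ⟨m, hm⟩ := hQp (g : G ⧸ K)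
  have hordg : orderOf ((g : G ⧸ K)) ∣ p ^ m := orderOf_dvd_of_pow_eq_one hm
  obtain ⟨l, hl, hord⟩ := (Nat.dvd_prime_pow Fact.out).mp hordg
  have hl1 : 1 ≤ l := by
    rcases Nat.eq_zero_or_pos l with rfl | h
    · exfalso; rw [pow_zero, orderOf_eq_one_iff] at hord; exact hgne hord
    · exact h
  set y : G ⧸ K := (g : G ⧸ K) ^ (p ^ (l - 1)) with hy_def
  have hyp : y ^ p = 1 := by
    rw [hy_def, ← pow_mul, ← pow_succ, Nat.sub_add_cancel hl1, ← hord, pow_orderOf_eq_one]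
  have hyne : y ≠ 1 := by
    rw [hy_def]
    intro h
    have := orderOf_dvd_of_pow_eq_one h
    rw [hord] at this
    have hlt : p ^ (l - 1) < p ^ l := Nat.pow_lt_pow_right (Fact.out : p.Prime).one_lt (by omega)
    exact Nat.not_dvd_of_pos_of_lt (Nat.pow_pos (Fact.out : p.Prime).pos) hlt this
  have hordy : orderOf y = p := orderOf_eq_prime hyp hyne
  -- subgroups of the quotient are ⊥ or ⊤
  have hsub : ∀ S : Subgroup (G ⧸ K), S = ⊥ ∨ S = ⊤ := by
    intro S
    have hle : K ≤ S.comap (QuotientGroup.mk' K) := by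
      intro x hx
      simp only [Subgroup.mem_comap]
      have : ((x : G) : G ⧸ K) = 1 := (QuotientGroup.eq_one_iff x).mpr hx
      rw [QuotientGroup.mk'_apply, this]
      exact one_mem S
    rcases eq_or_lt_of_le hle with heq | hlt
    · left
      have hmap := congrArg (Subgroup.map (QuotientGroup.mk' K)) heq
      rw [Subgroup.map_comap_eq_self_of_surjective (QuotientGroup.mk'_surjective K)] at hmap
      rw [← hmap]
      rw [eq_bot_iff]
      rintro w ⟨x, hx, rfl⟩
      simp only [Subgroup.mem_bot]
      exact (QuotientGroup.eq_one_iff x).mpr hx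
    · right
      have := hK.2 _ hlt
      have hmap := congrArg (Subgroup.map (QuotientGroup.mk' K)) this
      rw [Subgroup.map_comap_eq_self_of_surjective (QuotientGroup.mk'_surjective K)] at hmap
      rw [hmap, Subgroup.map_top_of_surjective _ (QuotientGroup.mk'_surjective K)]
  have hytop : Subgroup.zpowers y = ⊤ :=
    (hsub _).resolve_left (Subgroup.zpowers_ne_bot.mpr hyne)
  have hcardQ : Nat.card (G ⧸ K) = p := by
    rw [← hordy, ← Nat.card_zpowers, hytop]
    exact (Nat.card_congr Subgroup.topEquiv.toEquiv).symm
  have : ((x ^ p : G) : G ⧸ K) = 1 := by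
    have h1 : ((x ^ p : G) : G ⧸ K) = ((x : G ⧸ K)) ^ p := by push_cast; rfl
    rw [h1, ← hcardQ]
    exact pow_card_eq_one'
  exact (QuotientGroup.eq_one_iff _).mp this

section Key

universe u

lemma key_lemma {p : ℕ} [Fact p.Prime] (hodd : Odd p) :
    ∀ n : ℕ, ∀ (G : Type u) (_ : Group G) (_ : Finite G), Nat.card G = n →
      (∀ x y : G, ⁅x, y⁆ ∈ Subgroup.center G) →
      (∀ x : G, x ^ p ∈ Subgroup.center G) →
      Nat.card (Subgroup.center G) = p →
      ∀ k : ℤ, ¬((p : ℤ) ∣ k) →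
      ∃ φ : MulAut G, ∀ w ∈ Subgroup.center G, φ w = w ^ k := by
  intro n
  induction n using Nat.strong_induction_on with
  | _ n IH =>
  intro G _ _ hcard hcomm hpow hcenter k hk
  have hZw : ∀ w ∈ Subgroup.center G, w ^ p = 1 := by
    intro w hw
    have h1 : (⟨w, hw⟩ : ↥(Subgroup.center G)) ^ Nat.card ↥(Subgroup.center G) = 1 :=
      pow_card_eq_one'
    rw [hcenter] at h1
    exact congrArg Subtype.val h1
  -- integers coprime to p
  have hprime : Prime ((p : ℤ)) := Nat.prime_iff_prime_int.mp Fact.out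
  have hcop : IsCoprime ((p : ℤ)) k := hprime.coprime_iff_not_dvd.mpr hk
  obtain ⟨v, u, huv⟩ := hcop
  by_cases habel : ∀ x y : G, Commute x y
  · -- abelian case : G = center, use power map
    have hall : ∀ x : G, x ∈ Subgroup.center G := fun x =>
      Subgroup.mem_center_iff.mpr fun g => habel g x
    have hp1 : ∀ x : G, x ^ p = 1 := fun x => hZw x (hall x)
    have hzp1 : ∀ x : G, x ^ ((p : ℤ)) = 1 := fun x => by
      rw [zpow_natCast]; exact hp1 x
    have hku : ∀ x : G, (x ^ k) ^ u = x := by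
      intro x
      calc (x ^ k) ^ u = x ^ (k * u) := by rw [← zpow_mul]
        _ = x ^ (k * u) * (x ^ ((p:ℤ))) ^ v := by rw [hzp1, one_zpow, mul_one]
        _ = x ^ (k * u + (p:ℤ) * v) := by rw [← zpow_mul, ← zpow_add]
        _ = x ^ (1 : ℤ) := by congr 1; linarith
        _ = x := zpow_one x
    have huk : ∀ x : G, (x ^ u) ^ k = x := by
      intro x
      calc (x ^ u) ^ k = x ^ (u * k) := by rw [← zpow_mul]
        _ = x ^ (k * u) := by rw [Int.mul_comm]
        _ = (x ^ k) ^ u := by rw [zpow_mul]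
        _ = x := hku x
    refine ⟨{ toFun := fun x => x ^ k, invFun := fun x => x ^ u,
              left_inv := hku, right_inv := huk,
              map_mul' := fun x y => (habel x y).mul_zpow k }, fun w _ => rfl⟩
  · -- nonabelian case
    push_neg at habel
    obtain ⟨a₀, b₀, hab₀⟩ := habel
    have hz₀ne : ⁅a₀, b₀⁆ ≠ 1 := fun h => hab₀ (commutatorElement_eq_one_iff_commute.mp h)
    -- any nontrivial central element generates the center
    have hgen : ∀ w : G, w ∈ Subgroup.center G → w ≠ 1 →
        ∀ v' ∈ Subgroup.center G, v' ∈ Subgroup.zpowers w := by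
      intro w hw hwne v' hv'
      have h1 : Subgroup.zpowers (⟨w, hw⟩ : ↥(Subgroup.center G)) = ⊤ :=
        zpowers_eq_top_of_prime_card hcenter
          (fun h => hwne (congrArg Subtype.val h))
      have h2 : (⟨v', hv'⟩ : ↥(Subgroup.center G)) ∈ Subgroup.zpowers
          (⟨w, hw⟩ : ↥(Subgroup.center G)) := h1 ▸ Subgroup.mem_top _
      obtain ⟨j, hj⟩ := Subgroup.mem_zpowers_iff.mp h2
      exact Subgroup.mem_zpowers_iff.mpr ⟨j, congrArg Subtype.val hj⟩
    -- wlog step : find a b with ⁅a,b⁆ ≠ 1 and b ^ p = 1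
    obtain ⟨a, b, hz1', hbp⟩ : ∃ a b : G, ⁅a, b⁆ ≠ 1 ∧ b ^ p = 1 := by
      by_cases hb0 : b₀ ^ p = 1
      · exact ⟨a₀, b₀, hz₀ne, hb0⟩
      by_cases ha0 : a₀ ^ p = 1
      · refine ⟨b₀, a₀, ?_, ha0⟩
        intro h
        apply hz₀ne
        have h2 := congrArg Inv.inv h
        rwa [commutatorElement_inv, inv_one] at h2
      -- both a₀^p and b₀^p nontrivial
      set z₀ := ⁅a₀, b₀⁆ with hz₀_def
      have hz₀c : z₀ ∈ Subgroup.center G := hcomm a₀ b₀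
      have hordz₀ : orderOf z₀ = p := orderOf_eq_prime (hZw z₀ hz₀c) hz₀ne
      obtain ⟨t, ht⟩ := Subgroup.mem_zpowers_iff.mp (hgen z₀ hz₀c hz₀ne _ (hpow a₀))
      obtain ⟨s, hs⟩ := Subgroup.mem_zpowers_iff.mp (hgen z₀ hz₀c hz₀ne _ (hpow b₀))
      have hpt : ¬ ((p : ℤ) ∣ t) := by
        intro hdvd
        apply ha0
        rw [← ht, ← orderOf_dvd_iff_zpow_eq_one, hordz₀]
        exact hdvd
      set x := a₀ ^ s with hx_def
      set y := b₀ ^ (-t) with hy_def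
      set c := ⁅y⁻¹, x⁻¹⁆ with hc_def
      have hc : y * x = x * y * c := by
        rw [hc_def]; simp only [commutatorElement_def]; group
      have hcc : c ∈ Subgroup.center G := hcomm _ _
      have hchoose : c ^ (p.choose 2) = 1 := by
        have h2 : (2 : ℕ) ∣ (p - 1) := (Nat.Odd.sub_odd hodd odd_one).two_dvd
        rw [Nat.choose_two_right, Nat.mul_div_assoc p h2, pow_mul, hZw c hcc, one_pow]
      have hxyp : (x * y) ^ p = 1 := by
        rw [mul_pow_central hc hcc p, hchoose, mul_one]
        have hx : x ^ p = z₀ ^ (t * s) := by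
          rw [hx_def, ← zpow_natCast (a₀ ^ s) p, ← zpow_mul, Int.mul_comm, zpow_mul,
            zpow_natCast, ← ht, ← zpow_mul]
        have hy : y ^ p = z₀ ^ (s * (-t)) := by
          rw [hy_def, ← zpow_natCast (b₀ ^ (-t)) p, ← zpow_mul, Int.mul_comm, zpow_mul,
            zpow_natCast, ← hs, ← zpow_mul]
        rw [hx, hy, ← zpow_add]
        have : t * s + s * (-t) = 0 := by ring
        rw [this, zpow_zero]
      refine ⟨a₀, x * y, ?_, hxyp⟩
      have h3 : ⁅a₀, x * y⁆ = ⁅a₀, x⁆ * ⁅a₀, y⁆ := comm_mul_right (hcomm _ _)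
      have h4 : ⁅a₀, x⁆ = 1 := commutatorElement_eq_one_iff_commute.mpr
        ((Commute.refl a₀).zpow_right s)
      have h5 : ⁅a₀, y⁆ = z₀ ^ (-t) := by
        rw [hy_def, comm_zpow_right (hcomm a₀ b₀)]
      rw [h3, h4, h5, one_mul]
      intro h6
      apply hpt
      rw [← Int.dvd_neg]
      rw [← orderOf_dvd_iff_zpow_eq_one, hordz₀] at h6
      exact h6
    -- now set up the main objects
    set z := ⁅a, b⁆ with hz_def
    have hz1 : z ≠ 1 := hz1'
    have hzc : z ∈ Subgroup.center G := hcomm a b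
    have hzp : z ^ p = 1 := hZw z hzc
    have hap : a ^ (p * p) = 1 := by rw [pow_mul]; exact hZw _ (hpow a)
    have hordz : orderOf z = p := orderOf_eq_prime hzp hz1
    have hcenz : ∀ w ∈ Subgroup.center G, w ∈ Subgroup.zpowers z := hgen z hzc hz1
    set E : Subgroup G := Subgroup.closure {a, b} with hE_def
    set C : Subgroup G := Subgroup.centralizer {a, b} with hC_def
    have haE : a ∈ E := Subgroup.subset_closure (by simp)
    have hbE : b ∈ E := Subgroup.subset_closure (by simp)
    have hzE : z ∈ E := by
      rw [hz_def, commutatorElement_def]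
      exact mul_mem (mul_mem (mul_mem haE hbE) (inv_mem haE)) (inv_mem hbE)
    have hCcomm : ∀ c ∈ C, ∀ e ∈ E, Commute c e := by
      intro c hc e he
      induction he using Subgroup.closure_induction with
      | mem w hw =>
        simp only [Set.mem_insert_iff, Set.mem_singleton_iff] at hw
        rcases hw with rfl | rfl
        · exact (Subgroup.mem_centralizer_iff.mp hc w (by simp)).symm
        · exact (Subgroup.mem_centralizer_iff.mp hc w (by simp)).symm
      | one => exact Commute.one_right c
      | mul u' v' hu hv ihu ihv => exact ihu.mul_right ihv
      | inv u' hu ihu => exact ihu.inv_right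
    -- decomposition G = C * E
    have hdec : ∀ g : G, ∃ e ∈ E, ∃ cc ∈ C, g = cc * e := by
      intro g
      obtain ⟨i, hi⟩ := Subgroup.mem_zpowers_iff.mp (hcenz ⁅a, g⁆ (hcomm a g))
      obtain ⟨j, hj⟩ := Subgroup.mem_zpowers_iff.mp (hcenz ⁅b, g⁆ (hcomm b g))
      set e := a ^ (-j) * b ^ i with he_def
      have heE : e ∈ E := mul_mem (Subgroup.zpow_mem E haE _) (Subgroup.zpow_mem E hbE _)
      have hae : ⁅a, e⁆ = z ^ i := by
        rw [he_def, comm_mul_right (hcomm _ _), comm_zpow_right (hcomm a b),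
          commutatorElement_eq_one_iff_commute.mpr ((Commute.refl a).zpow_right (-j)), one_mul,
          ← hz_def]
      have hbe : ⁅b, e⁆ = z ^ j := by
        have h1 : ⁅b, a⁆ = z⁻¹ := by rw [← commutatorElement_inv, ← hz_def]
        rw [he_def, comm_mul_right (hcomm _ _), comm_zpow_right (hcomm b a), h1,
          commutatorElement_eq_one_iff_commute.mpr ((Commute.refl b).zpow_right i), mul_one,
          inv_zpow, zpow_neg, inv_inv]
      refine ⟨e, heE, g * e⁻¹, ?_, by group⟩
      rw [Subgroup.mem_centralizer_iff]
      rintro h hh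
      simp only [Set.mem_insert_iff, Set.mem_singleton_iff] at hh
      have hae' : ∀ h' : G, ⁅h', e⁆ = ⁅h', g⁆ → h' * (g * e⁻¹) = (g * e⁻¹) * h' := by
        intro h' hcom
        have h2 : ⁅h', g * e⁻¹⁆ = ⁅h', g⁆ * ⁅h', e⁻¹⁆ := comm_mul_right (by
          rw [show (e⁻¹ : G) = e ^ (-1 : ℤ) by group, comm_zpow_right (hcomm h' e)]
          exact Subgroup.zpow_mem _ (hcomm h' e) _)
        have h3 : ⁅h', e⁻¹⁆ = ⁅h', e⁆⁻¹ := by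
          rw [show (e⁻¹ : G) = e ^ (-1 : ℤ) by group, comm_zpow_right (hcomm h' e)]
          group
        have h4 : ⁅h', g * e⁻¹⁆ = 1 := by rw [h2, h3, hcom]; group
        exact (commutatorElement_eq_one_iff_commute.mp h4).eq
      rcases hh with rfl | rfl
      · exact hae' h (by rw [hae, hi])
      · exact hae' h (by rw [hbe, hj])
    -- case split on whether C is abelian
    by_cases habC : ∀ x ∈ C, ∀ y ∈ C, Commute x y
    · -- C abelian : G = E, apply base_aut directly
      have hCcen : ∀ cc ∈ C, cc ∈ Subgroup.center G := by
        intro cc hcc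
        rw [Subgroup.mem_center_iff]
        intro g
        obtain ⟨e, he, c', hc', rfl⟩ := hdec g
        have h1 : Commute cc c' := (habC cc hcc c' hc').symm.symm
        have h2 : Commute cc e := hCcomm cc hcc e he
        calc c' * e * cc = c' * (cc * e) := by rw [mul_assoc, ← h2.eq]
          _ = c' * cc * e := by rw [← mul_assoc]
          _ = cc * c' * e := by rw [h1.symm.eq]
          _ = cc * (c' * e) := by rw [mul_assoc]
      have htopE : Subgroup.closure ({a, b} : Set G) = ⊤ := by
        rw [eq_top_iff]
        intro g _
        obtain ⟨e, he, c', hc', rfl⟩ := hdec g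
        have h1 : c' ∈ E := by
          obtain ⟨j, hj⟩ := Subgroup.mem_zpowers_iff.mp (hcenz c' (hCcen c' hc'))
          rw [← hj]
          exact Subgroup.zpow_mem E hzE j
        exact mul_mem h1 he
      obtain ⟨φ, hφ⟩ := base_aut hz_def.symm hzc hz1 hzp hap hbp htopE hk
      exact ⟨φ, fun w hw => hφ w (hcenz w hw)⟩
    · -- C nonabelian : induction
      push_neg at habC
      have hcenC : ∀ x : ↥C, x ∈ Subgroup.center ↥C ↔ (x : G) ∈ Subgroup.center G := by
        intro x
        constructor
        · intro hx
          rw [Subgroup.mem_center_iff]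
          intro g
          obtain ⟨e, he, c', hc', rfl⟩ := hdec g
          have h1 : c' * (x : G) = (x : G) * c' := by
            have := Subgroup.mem_center_iff.mp hx ⟨c', hc'⟩
            exact congrArg Subtype.val this
          have h2 : Commute (x : G) e := hCcomm _ x.2 e he
          calc c' * e * (x : G) = c' * ((x : G) * e) := by rw [mul_assoc, ← h2.eq]
            _ = (x : G) * (c' * e) := by rw [← mul_assoc, h1, mul_assoc]
        · intro hx
          rw [Subgroup.mem_center_iff]
          intro g
          exact Subtype.ext (Subgroup.mem_center_iff.mp hx (g : G))
      have hcommC : ∀ x y : ↥C, ⁅x, y⁆ ∈ Subgroup.center ↥C := by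
        intro x y
        rw [hcenC]
        exact hcomm _ _
      have hpowC : ∀ x : ↥C, x ^ p ∈ Subgroup.center ↥C := by
        intro x
        rw [hcenC]
        push_cast
        exact hpow _
      have hmapC : (Subgroup.center ↥C).map C.subtype = Subgroup.center G := by
        apply le_antisymm
        · rintro w ⟨x, hx, rfl⟩
          exact (hcenC x).mp hx
        · intro w hw
          have hwC : w ∈ C := by
            rw [Subgroup.mem_centralizer_iff]
            intro h _
            exact Subgroup.mem_center_iff.mp hw h
          exact ⟨⟨w, hwC⟩, (hcenC ⟨w, hwC⟩).mpr hw, rfl⟩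
      have hcardC : Nat.card (Subgroup.center ↥C) = p := by
        rw [← hcenter, ← hmapC]
        exact Nat.card_congr
          ((Subgroup.center ↥C).equivMapOfInjective C.subtype C.subtype_injective).toEquiv
      have hbC : b ∉ C := by
        intro hbC
        apply hz1
        rw [hz_def]
        exact commutatorElement_eq_one_iff_commute.mpr
          (Subgroup.mem_centralizer_iff.mp hbC a (by simp))
      have hlt : Nat.card ↥C < n := by
        have hdvd : Nat.card ↥C ∣ n := hcard ▸ Subgroup.card_subgroup_dvd_card C
        have hne : Nat.card ↥C ≠ n := by
          intro h
          apply hbC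
          have : C = ⊤ := Subgroup.eq_top_of_card_eq C (h.trans hcard.symm)
          rw [this]; exact Subgroup.mem_top b
        have hpos : 0 < n := hcard ▸ Nat.card_pos
        exact Nat.lt_of_le_of_ne (Nat.le_of_dvd hpos hdvd) hne
      obtain ⟨φC, hφC⟩ := IH (Nat.card ↥C) hlt ↥C inferInstance inferInstance rfl
        hcommC hpowC hcardC k hk
      -- base_aut on E
      set aE : ↥E := ⟨a, haE⟩
      set bE : ↥E := ⟨b, hbE⟩
      set zE : ↥E := ⟨z, hzE⟩
      have hzabE : ⁅aE, bE⁆ = zE := Subtype.ext hz_def.symm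
      have hzcE : zE ∈ Subgroup.center ↥E := by
        rw [Subgroup.mem_center_iff]
        intro g
        exact Subtype.ext (Subgroup.mem_center_iff.mp hzc (g : G))
      have hz1E : zE ≠ 1 := fun h => hz1 (congrArg Subtype.val h)
      have hzpE : zE ^ p = 1 := Subtype.ext (by push_cast; exact hzp)
      have hapE : aE ^ (p * p) = 1 := Subtype.ext (by push_cast; exact hap)
      have hbpE : bE ^ p = 1 := Subtype.ext (by push_cast; exact hbp)
      have htopE' : Subgroup.closure ({aE, bE} : Set ↥E) = ⊤ := by
        rw [eq_top_iff, ← Subgroup.closure_closure_coe_preimage (k := {a, b})]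
        apply Subgroup.closure_mono
        rintro x hx
        simp only [Set.mem_preimage, Set.mem_insert_iff, Set.mem_singleton_iff] at hx ⊢
        rcases hx with h | h
        · left; exact Subtype.ext h
        · right; exact Subtype.ext h
      obtain ⟨φE, hφE⟩ := base_aut hzabE hzcE hz1E hzpE hapE hbpE htopE' hk
      -- glue
      have hcommEC : ∀ (e : ↥E) (c : ↥C), Commute (E.subtype e) (C.subtype c) :=
        fun e c => (hCcomm _ c.2 _ e.2).symm
      set π : (↥E × ↥C) →* G := MonoidHom.noncommCoprod E.subtype C.subtype hcommEC with hπ_def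
      have hπs : Function.Surjective π := by
        intro g
        obtain ⟨e, he, c', hc', rfl⟩ := hdec g
        refine ⟨(⟨e, he⟩, ⟨c', hc'⟩), ?_⟩
        rw [hπ_def, MonoidHom.noncommCoprod_apply]
        exact (hCcomm c' hc' e he).eq.symm
      set ψ : (↥E × ↥C) →* G := MonoidHom.noncommCoprod (E.subtype.comp φE.toMonoidHom)
        (C.subtype.comp φC.toMonoidHom)
        (fun e c => hcommEC (φE e) (φC c)) with hψ_def
      have hψapp : ∀ s : ↥E × ↥C, ψ s = ((φE s.1 : ↥E) : G) * ((φC s.2 : ↥C) : G) :=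
        fun s => MonoidHom.noncommCoprod_apply _ _ _ _
      have hπapp : ∀ s : ↥E × ↥C, π s = ((s.1 : ↥E) : G) * ((s.2 : ↥C) : G) :=
        fun s => MonoidHom.noncommCoprod_apply _ _ _ _
      have hker : ∀ s : ↥E × ↥C, π s = 1 → ψ s = 1 := by
        rintro ⟨e, c⟩ hs
        rw [hπapp] at hs
        have hec : (e : G) = ((c : G))⁻¹ := mul_eq_one_iff_eq_inv.mp hs
        have heC : (e : G) ∈ C := by rw [hec]; exact inv_mem c.2
        have hecen : (e : G) ∈ Subgroup.center G := by
          rw [Subgroup.mem_center_iff]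
          intro g
          obtain ⟨e', he', c', hc', rfl⟩ := hdec g
          have h1 : Commute (e : G) e' := hCcomm _ heC e' he'
          have h2 : Commute (e : G) c' := (hCcomm c' hc' _ e.2).symm
          calc c' * e' * (e : G) = c' * ((e:G) * e') := by rw [mul_assoc, ← h1.eq]
            _ = c' * (e:G) * e' := by rw [← mul_assoc]
            _ = (e:G) * c' * e' := by rw [h2.symm.eq]
            _ = (e:G) * (c' * e') := by rw [mul_assoc]
        obtain ⟨j, hj⟩ := Subgroup.mem_zpowers_iff.mp (hcenz _ hecen)
        have heE' : e ∈ Subgroup.zpowers zE :=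
          Subgroup.mem_zpowers_iff.mpr ⟨j, Subtype.ext (by push_cast; exact hj)⟩
        have hφEe : φE e = e ^ k := hφE e heE'
        have hccen : c ∈ Subgroup.center ↥C := by
          rw [hcenC]
          rw [← inv_inv (c : G), ← hec]
          exact inv_mem hecen
        have hφCc : φC c = c ^ k := hφC c hccen
        rw [hψapp, hφEe, hφCc]
        show ((e ^ k : ↥E) : G) * ((c ^ k : ↥C) : G) = 1
        have h3 : ((e ^ k : ↥E) : G) = (e : G) ^ k := by push_cast; rfl
        have h4 : ((c ^ k : ↥C) : G) = (c : G) ^ k := by push_cast; rfl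
        rw [h3, h4, hec, inv_zpow, inv_mul_cancel]
      -- build the glued automorphism
      set q := QuotientGroup.quotientKerEquivOfSurjective π hπs with hq_def
      set ψbar : ((↥E × ↥C) ⧸ π.ker) →* G := QuotientGroup.lift π.ker ψ
        (fun s hs => hker s (MonoidHom.mem_ker.mp hs)) with hψbar_def
      set Φ : G →* G := ψbar.comp q.symm.toMonoidHom with hΦ_def
      have hΦπ : ∀ s : ↥E × ↥C, Φ (π s) = ψ s := by
        intro s
        have h1 : q ((s : (↥E × ↥C) ⧸ π.ker)) = π s := QuotientGroup.kerLift_mk π s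
        have h2 : q.symm (π s) = (s : (↥E × ↥C) ⧸ π.ker) := by
          rw [MulEquiv.symm_apply_eq, h1]
        rw [hΦ_def]
        show ψbar (q.symm (π s)) = ψ s
        rw [h2, hψbar_def]
        exact QuotientGroup.lift_mk' _ _ s
      have hΦsurj : Function.Surjective Φ := by
        intro g
        obtain ⟨e, he, c', hc', rfl⟩ := hdec g
        refine ⟨π (φE.symm ⟨e, he⟩, φC.symm ⟨c', hc'⟩), ?_⟩
        rw [hΦπ, hψapp]
        simp only [MulEquiv.apply_symm_apply]
        exact ((hCcomm c' hc' e he).eq).symm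
      have hΦbij : Function.Bijective Φ := ⟨Finite.injective_iff_surjective.mpr hΦsurj, hΦsurj⟩
      refine ⟨MulEquiv.ofBijective Φ hΦbij, ?_⟩
      intro w hw
      obtain ⟨j, hj⟩ := Subgroup.mem_zpowers_iff.mp (hcenz w hw)
      have hwE : w ∈ E := by rw [← hj]; exact Subgroup.zpow_mem E hzE j
      have hwzE : (⟨w, hwE⟩ : ↥E) ∈ Subgroup.zpowers zE :=
        Subgroup.mem_zpowers_iff.mpr ⟨j, Subtype.ext (by push_cast; exact hj)⟩
      have h0 : w = π ((⟨w, hwE⟩ : ↥E), (1 : ↥C)) := by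
        rw [hπapp]; simp
      show Φ w = w ^ k
      calc Φ w = ψ ((⟨w, hwE⟩ : ↥E), (1 : ↥C)) := by
            conv_lhs => rw [h0]
            exact hΦπ _
        _ = ((φE ⟨w, hwE⟩ : ↥E) : G) * ((φC 1 : ↥C) : G) := hψapp _
        _ = (((⟨w, hwE⟩ : ↥E) ^ k : ↥E) : G) * 1 := by
            rw [hφE _ hwzE, map_one]; rfl
        _ = w ^ k := by rw [mul_one]; push_cast; rfl

end Key

section Top

lemma isCyclic_mulAut_of_prime_card {p : ℕ} [hp : Fact p.Prime] {Z : Type*} [Group Z] [Finite Z]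
    (h : Nat.card Z = p) : IsCyclic (MulAut Z) := by
  subst h
  haveI hZc : IsCyclic Z := isCyclic_of_prime_card rfl
  haveI : NeZero (Nat.card Z) := ⟨Nat.card_pos.ne'⟩
  have e1 : Multiplicative (ZMod (Nat.card Z)) ≃* Z := zmodCyclicMulEquiv hZc
  have e2 : MulAut (Multiplicative (ZMod (Nat.card Z))) ≃* MulAut Z := MulAut.congr e1
  have e3 : MulAut (Multiplicative (ZMod (Nat.card Z))) ≃* Multiplicative (AddAut (ZMod (Nat.card Z))) :=
    MulAutMultiplicative _
  have e4 : Multiplicative (AddAut (ZMod (Nat.card Z))) ≃* (ZMod (Nat.card Z))ˣ :=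
    AddEquiv.toMultiplicative (ZMod.AddAutEquivUnits (Nat.card Z))
  have e : (ZMod (Nat.card Z))ˣ ≃* MulAut Z := (e3.trans e4).symm.trans e2
  exact isCyclic_of_surjective e.toMonoidHom e.surjective

theorem aut_mod_central_action' (p : ℕ) [Fact p.Prime] (G : Type*) [Group G] [Finite G]
    (hpG : IsPGroup p G) (hcc : Subgroup.center G = commutator G)
    (hcf : Subgroup.center G = frattini G) (hcard : Nat.card (Subgroup.center G) = p) :
    ∃ H : Subgroup (MulAut G),
      (∀ φ : MulAut G, φ ∈ H ↔ ∀ z ∈ Subgroup.center G, φ z = z) ∧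
      H.Normal ∧
      ∃ _ : H.Normal, IsCyclic (MulAut G ⧸ H) ∧ Nat.card (MulAut G ⧸ H) = p - 1 := by
  classical
  have hcomm : ∀ x y : G, ⁅x, y⁆ ∈ Subgroup.center G := by
    intro x y
    rw [hcc, _root_.commutator_def]
    exact Subgroup.commutator_mem_commutator (Subgroup.mem_top x) (Subgroup.mem_top y)
  have hpow : ∀ x : G, x ^ p ∈ Subgroup.center G := by
    intro x
    rw [hcf]
    exact pow_p_mem_frattini hpG x
  have hmem : ∀ (φ : MulAut G) (x : G), x ∈ Subgroup.center G → φ x ∈ Subgroup.center G := by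
    intro φ x hx
    rw [Subgroup.mem_center_iff]
    intro g
    have h1 : φ (x * φ.symm g) = φ x * g := by rw [map_mul, MulEquiv.apply_symm_apply]
    have h2 : φ (φ.symm g * x) = g * φ x := by rw [map_mul, MulEquiv.apply_symm_apply]
    rw [← h1, ← h2, Subgroup.mem_center_iff.mp hx (φ.symm g)]
  set Z := Subgroup.center G with hZ_def
  set res : MulAut G →* MulAut ↥Z :=
    { toFun := fun φ =>
        { toFun := fun x => ⟨φ x, hmem φ x.1 x.2⟩
          invFun := fun x => ⟨φ.symm x, hmem φ⁻¹ x.1 x.2⟩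
          left_inv := fun x => Subtype.ext (φ.symm_apply_apply x)
          right_inv := fun x => Subtype.ext (φ.apply_symm_apply x)
          map_mul' := fun x y => Subtype.ext (map_mul φ (x : G) (y : G)) }
      map_one' := by ext x; rfl
      map_mul' := fun φ χ => by ext x; rfl } with hres_def
  have hresapp : ∀ (φ : MulAut G) (x : ↥Z), ((res φ x : ↥Z) : G) = φ (x : G) :=
    fun φ x => rfl
  haveI hZcyc : IsCyclic ↥Z := isCyclic_of_prime_card hcard
  haveI : Nontrivial ↥Z := by
    apply Finite.one_lt_card_iff_nontrivial.mp
    rw [hcard]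
    exact (Fact.out : p.Prime).one_lt
  have hZp1 : ∀ x : ↥Z, x ^ p = 1 := by
    intro x
    have := pow_card_eq_one' (G := ↥Z) (x := x)
    rwa [hcard] at this
  have hsurj : Function.Surjective res := by
    intro ψ
    obtain ⟨m, hm⟩ := MonoidHom.map_cyclic ψ.toMonoidHom
    have hpm : ¬ ((p : ℤ) ∣ m) := by
      intro hdvd
      obtain ⟨z₀, hz₀⟩ := exists_ne (1 : ↥Z)
      have hordz : orderOf z₀ = p := orderOf_eq_prime (hZp1 z₀) hz₀
      have h1 : z₀ ^ m = 1 := by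
        rw [← orderOf_dvd_iff_zpow_eq_one, hordz]
        exact hdvd
      have h2 : ψ z₀ = 1 := by have h := hm z₀; rw [h1] at h; exact h
      exact hz₀ (ψ.injective (by rw [h2, map_one]))
    rcases (Fact.out : p.Prime).eq_two_or_odd' with hp2 | hodd
    · -- p = 2 : ψ must be the identity
      subst hp2
      refine ⟨1, ?_⟩
      ext x
      have hoddm : Odd m := Int.not_even_iff_odd.mp
        (fun he => hpm (by exact_mod_cast he.two_dvd))
      obtain ⟨l, hl⟩ := hoddm
      have hx2 : x ^ (2 : ℤ) = 1 := by
        rw [show (2 : ℤ) = ((2 : ℕ) : ℤ) by norm_num, zpow_natCast]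
        exact hZp1 x
      have hxm : x ^ m = x := by
        rw [hl, zpow_add, zpow_mul, hx2, one_zpow, one_mul, zpow_one]
      have h2 : ψ x = x := by
        have h := hm x
        rw [hxm] at h
        exact h
      rw [h2]
      rfl
    · obtain ⟨φ, hφ⟩ := key_lemma hodd (Nat.card G) G inferInstance inferInstance rfl
        hcomm hpow hcard m hpm
      refine ⟨φ, ?_⟩
      ext x
      have h1 : ((res φ x : ↥Z) : G) = φ (x : G) := hresapp φ x
      have h2 : φ (x : G) = (x : G) ^ m := hφ (x : G) x.2
      have h4 : ((ψ x : ↥Z) : G) = (x : G) ^ m := by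
        have h3 : ψ x = x ^ m := hm x
        rw [h3]
        push_cast
        rfl
      rw [h1, h4, h2]
  refine ⟨res.ker, ?_, inferInstance, inferInstance, ?_, ?_⟩
  · intro φ
    constructor
    · intro h z hz
      have h1 : res φ = 1 := MonoidHom.mem_ker.mp h
      have h2 := congrArg Subtype.val (MulEquiv.ext_iff.mp h1 ⟨z, hz⟩)
      exact h2
    · intro h
      apply MonoidHom.mem_ker.mpr
      ext x
      exact h (x : G) x.2
  · have e := QuotientGroup.quotientKerEquivOfSurjective res hsurj
    haveI : IsCyclic (MulAut ↥Z) := isCyclic_mulAut_of_prime_card hcard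
    exact isCyclic_of_surjective e.symm.toMonoidHom e.symm.surjective
  · have e := QuotientGroup.quotientKerEquivOfSurjective res hsurj
    rw [Nat.card_congr e.toEquiv, IsCyclic.card_mulAut, hcard, Nat.totient_prime Fact.out]

end Top


/-- For an extraspecial `p`-group `G`, the automorphisms acting trivially on the center form
a normal subgroup `H` of `Aut G`, and `Aut G ⧸ H` is cyclic of order `p - 1`. -/
theorem aut_mod_central_action (p : ℕ) [Fact p.Prime] (G : Type*) [Group G] [Finite G]
    (hG : IsExtraspecial p G) :
    ∃ H : Subgroup (MulAut G),
      (∀ φ : MulAut G, φ ∈ H ↔ ∀ z ∈ Subgroup.center G, φ z = z) ∧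
      H.Normal ∧
      ∃ _ : H.Normal, IsCyclic (MulAut G ⧸ H) ∧ Nat.card (MulAut G ⧸ H) = p - 1 := by
  obtain ⟨hpG, hcc, hcf, hcard⟩ := hG
  exact aut_mod_central_action' p G hpG hcc hcf hcard
end

section
/- For n ≥ 3, the group G = ⟨a, b : a^(2^(n−1)) = b^2 = 1, a^b = a^(1+2^(n−2))⟩ (the modular group of order 2^n) satisfies |Aut(G)| = |G| = 2^n. -/
private lemma aux_pow_mod {G : Type*} [Group G] {M : ℕ} {x : G} (hx : x ^ M = 1) (k : ℕ) :
    x ^ k = x ^ (k % M) := by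
  conv_lhs => rw [← Nat.div_add_mod k M]
  rw [pow_add, pow_mul, hx, one_pow, one_mul]

private lemma aux_pow_cast_val {G : Type*} [Group G] {M : ℕ} [NeZero M] {x : G}
    (hx : x ^ M = 1) (k : ℕ) : x ^ ((k : ZMod M)).val = x ^ k := by
  rw [ZMod.val_natCast, ← aux_pow_mod hx]

private lemma aux_pow_congr {G : Type*} [Group G] {M : ℕ} [NeZero M] {x : G}
    (hx : x ^ M = 1) {k l : ℕ} (h : (k : ZMod M) = (l : ZMod M)) : x ^ k = x ^ l := by
  rw [← aux_pow_cast_val hx k, h, aux_pow_cast_val hx l]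

private lemma aux_conj_rel_pow {G : Type*} [Group G] {x y : G} {r : ℕ}
    (h : y * x * y⁻¹ = x ^ r) (u k : ℕ) : y ^ u * x ^ k = x ^ (r ^ u * k) * y ^ u := by
  have base : ∀ k : ℕ, y * x ^ k = x ^ (r * k) * y := by
    intro k
    have : y * x ^ k * y⁻¹ = (y * x * y⁻¹) ^ k := by
      rw [conj_pow]
    rw [h, ← pow_mul] at this
    rw [← this]; group
  induction u generalizing k with
  | zero => simp
  | succ u ih =>
    rw [pow_succ, mul_assoc, base, ← mul_assoc, ih (r * k), mul_assoc, ← pow_succ]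
    congr 2
    ring

/-- multiplication law for normal forms -/
private lemma aux_mul {G : Type*} [Group G] {a b : G} {r : ℕ}
    (hconj : b * a * b⁻¹ = a ^ r) (i s j t : ℕ) :
    (a ^ i * b ^ s) * (a ^ j * b ^ t) = a ^ (i + r ^ s * j) * b ^ (s + t) := by
  have := aux_conj_rel_pow hconj s j
  calc a ^ i * b ^ s * (a ^ j * b ^ t) = a ^ i * (b ^ s * a ^ j) * b ^ t := by group
    _ = a ^ i * (a ^ (r ^ s * j) * b ^ s) * b ^ t := by rw [this]
    _ = a ^ (i + r ^ s * j) * b ^ (s + t) := by rw [pow_add, pow_add]; group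

private lemma aux_ainv {G : Type*} [Group G] {a : G} {M : ℕ} (hM : 0 < M) (ha : a ^ M = 1)
    (i : ℕ) : (a ^ i)⁻¹ = a ^ ((M - 1) * i) := by
  have h : a ^ ((M - 1) * i) * a ^ i = 1 := by
    rw [← pow_add]
    have : (M - 1) * i + i = M * i := by
      have : M - 1 + 1 = M := by omega
      calc (M - 1) * i + i = (M - 1 + 1) * i := by ring
        _ = M * i := by rw [this]
    rw [this, pow_mul, ha, one_pow]
  exact inv_eq_of_mul_eq_one_left h

/-- normal form existence -/
private lemma aux_surj {G : Type*} [Group G] {a b : G} {M r : ℕ} (hM : 0 < M)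
    (ha : a ^ M = 1) (hb : b ^ 2 = 1) (hconj : b * a * b⁻¹ = a ^ r)
    (hgen : Subgroup.closure {a, b} = ⊤) :
    ∀ g : G, ∃ i t : ℕ, t < 2 ∧ g = a ^ i * b ^ t := by
  let S : Subgroup G :=
    { carrier := {g | ∃ i t : ℕ, t < 2 ∧ g = a ^ i * b ^ t}
      one_mem' := ⟨0, 0, by omega, by simp⟩
      mul_mem' := by
        rintro _ _ ⟨i, s, hs, rfl⟩ ⟨j, t, ht, rfl⟩
        refine ⟨i + r ^ s * j, (s + t) % 2, Nat.mod_lt _ (by omega), ?_⟩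
        rw [aux_mul hconj, aux_pow_mod hb (s + t)]
      inv_mem' := by
        rintro _ ⟨i, s, hs, rfl⟩
        interval_cases s
        · exact ⟨(M - 1) * i, 0, by omega, by simpa using aux_ainv hM ha i⟩
        · refine ⟨r * ((M - 1) * i), 1, by omega, ?_⟩
          have hbinv : b⁻¹ = b := by
            have : b * b = 1 := by rw [← pow_two]; exact hb
            exact inv_eq_of_mul_eq_one_left this
          rw [pow_one, mul_inv_rev, hbinv, aux_ainv hM ha i]
          have := aux_conj_rel_pow hconj 1 ((M - 1) * i)
          simpa using this }
  have hS : S = ⊤ := by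
    rw [eq_top_iff, ← hgen, Subgroup.closure_le]
    rintro g (rfl | rfl)
    · exact ⟨1, 0, by omega, by simp⟩
    · exact ⟨0, 1, by omega, by simp⟩
  intro g
  have : g ∈ S := by rw [hS]; trivial
  exact this

private lemma aux_h2Q (n : ℕ) (hn : 3 ≤ n) : 2 * 2 ^ (n-2) = 2 ^ (n-1) := by
  rw [← pow_succ']; congr 1; omega

private lemma aux_exp (n : ℕ) (hn : 3 ≤ n) {G : Type*} [Group G] {a b : G}
    (ha : a ^ 2 ^ (n-1) = 1) (hb : b ^ 2 = 1) (hconj : b * a * b⁻¹ = a ^ (1 + 2 ^ (n-2)))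
    (hgen : Subgroup.closure {a, b} = ⊤) :
    ∀ g : G, g ^ 2 ^ (n-1) = 1 := by
  have hM : (0:ℕ) < 2 ^ (n-1) := by positivity
  intro g
  obtain ⟨i, t, ht, rfl⟩ := aux_surj hM ha hb hconj hgen g
  interval_cases t
  · simp only [pow_zero, mul_one]
    rw [← pow_mul, mul_comm, pow_mul, ha, one_pow]
  · have h2 : (a ^ i * b ^ 1) ^ 2 = a ^ (i + (1 + 2 ^ (n-2)) * i) := by
      rw [pow_two, aux_mul hconj, pow_one, hb, mul_one]
    rw [← aux_h2Q n hn, pow_mul, h2, ← pow_mul]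
    have hdvd : 2 ^ (n-1) ∣ (i + (1 + 2 ^ (n-2)) * i) * 2 ^ (n-2) := by
      have he : (i + (1 + 2 ^ (n-2)) * i) * 2 ^ (n-2)
          = i * (2 * 2 ^ (n-2)) + i * (2 ^ (n-2) * 2 ^ (n-2)) := by ring
      rw [he]
      refine dvd_add (Dvd.dvd.mul_left ?_ i) (Dvd.dvd.mul_left ?_ i)
      · rw [aux_h2Q n hn]
      · rw [← pow_add]
        exact pow_dvd_pow 2 (by omega)
    obtain ⟨c, hc⟩ := hdvd
    rw [hc, pow_mul, ha, one_pow]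

private lemma aux_bij (n : ℕ) (hn : 3 ≤ n) {G : Type*} [Group G] [Finite G] {a b : G}
    (ha : a ^ 2 ^ (n-1) = 1) (hb : b ^ 2 = 1) (hconj : b * a * b⁻¹ = a ^ (1 + 2 ^ (n-2)))
    (hgen : Subgroup.closure {a, b} = ⊤) (hcard : Nat.card G = 2 ^ n) :
    Function.Bijective (fun p : ZMod (2 ^ (n-1)) × ZMod 2 => a ^ p.1.val * b ^ p.2.val) := by
  haveI : NeZero (2 ^ (n-1)) := ⟨by positivity⟩
  cases nonempty_fintype G
  rw [Fintype.bijective_iff_surjective_and_card]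
  constructor
  · intro g
    obtain ⟨i, t, ht, rfl⟩ := aux_surj (by positivity) ha hb hconj hgen g
    exact ⟨((i : ZMod (2 ^ (n-1))), (t : ZMod 2)), by
      simp only []
      rw [aux_pow_cast_val ha, aux_pow_cast_val hb]⟩
  · rw [Fintype.card_prod, ZMod.card, ZMod.card, ← Nat.card_eq_fintype_card, hcard,
      ← pow_succ]
    congr 1
    omega

private lemma aux_eq_iff (n : ℕ) (hn : 3 ≤ n) {G : Type*} [Group G] {a b : G}
    (ha : a ^ 2 ^ (n-1) = 1) (hb : b ^ 2 = 1)
    (hbij : Function.Bijective (fun p : ZMod (2 ^ (n-1)) × ZMod 2 => a ^ p.1.val * b ^ p.2.val)) :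
    ∀ k u l v : ℕ, (a ^ k * b ^ u = a ^ l * b ^ v) ↔
      ((k : ZMod (2 ^ (n-1))) = (l : ZMod (2 ^ (n-1))) ∧ (u : ZMod 2) = (v : ZMod 2)) := by
  haveI : NeZero (2 ^ (n-1)) := ⟨by positivity⟩
  intro k u l v
  constructor
  · intro h
    have h2 := hbij.injective (a₁ := ((k : ZMod (2 ^ (n-1))), (u : ZMod 2)))
      (a₂ := ((l : ZMod (2 ^ (n-1))), (v : ZMod 2))) (by
        simp only []
        rw [aux_pow_cast_val ha, aux_pow_cast_val hb, aux_pow_cast_val ha, aux_pow_cast_val hb]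
        exact h)
    exact ⟨congrArg Prod.fst h2, congrArg Prod.snd h2⟩
  · rintro ⟨h1, h2⟩
    rw [aux_pow_congr ha h1, aux_pow_congr hb h2]

private lemma aux_center (n : ℕ) (hn : 3 ≤ n) {G : Type*} [Group G] {a b : G}
    (ha : a ^ 2 ^ (n-1) = 1) (hb : b ^ 2 = 1) (hconj : b * a * b⁻¹ = a ^ (1 + 2 ^ (n-2)))
    (hgen : Subgroup.closure {a, b} = ⊤) :
    ∀ k : ℕ, 2 ∣ k → ∀ g : G, Commute (a ^ k) g := by
  haveI : NeZero (2 ^ (n-1)) := ⟨by positivity⟩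
  have hqzero : (2:ZMod (2 ^ (n-1))) * 2 ^ (n-2) = 0 := by
    have h1 := congrArg (Nat.cast : ℕ → ZMod (2 ^ (n-1))) (aux_h2Q n hn)
    have h2 := ZMod.natCast_self (2 ^ (n-1))
    push_cast at h1 h2
    rw [h1, h2]
  have hc2 : Commute (a ^ 2) b := by
    have h := aux_conj_rel_pow hconj 1 2
    simp only [pow_one] at h
    have h2 : a ^ ((1 + 2 ^ (n-2)) * 2) = a ^ 2 := by
      apply aux_pow_congr ha
      push_cast
      linear_combination hqzero
    rw [h2] at h
    exact (Commute.symm (h : Commute b (a ^ 2)))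
  intro k hk g
  obtain ⟨i, t, ht, rfl⟩ := aux_surj (by positivity) ha hb hconj hgen g
  have hcg : Commute (a ^ 2) (a ^ i * b ^ t) :=
    (Commute.pow_pow_self a 2 i).mul_right (hc2.pow_right t)
  obtain ⟨c, rfl⟩ := hk
  rw [pow_mul]
  exact hcg.pow_left c


private lemma aux_close {G : Type*} [Group G] {a b x y : G}
    (hgen : Subgroup.closure {a, b} = ⊤)
    (hamem : a ∈ Subgroup.closure {x, y}) (hbmem : b ∈ Subgroup.closure {x, y}) :
    Subgroup.closure {x, y} = ⊤ := by
  rw [eq_top_iff, ← hgen, Subgroup.closure_le]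
  rintro g hg
  simp only [Set.mem_insert_iff, Set.mem_singleton_iff] at hg
  rcases hg with rfl | rfl <;> assumption

private lemma aux_odd_a (n : ℕ) (hn : 3 ≤ n) {G : Type*} [Group G] {a : G}
    (ha : a ^ 2 ^ (n-1) = 1) {k : ℕ} (hk : ¬ 2 ∣ k) {H : Subgroup G}
    (hmem : a ^ k ∈ H) : a ∈ H := by
  have hcop : Nat.Coprime k (2 ^ (n-1)) :=
    Nat.Coprime.pow_right _ (Nat.coprime_two_right.mpr (Nat.odd_iff.mpr (by omega)))
  have hM1 : 1 < 2 ^ (n-1) := by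
    calc 1 < 2 ^ 1 := by norm_num
      _ ≤ 2 ^ (n-1) := Nat.pow_le_pow_right (by norm_num) (by omega)
  obtain ⟨u, -, hu⟩ := Nat.exists_mul_mod_eq_one_of_coprime hcop hM1
  have : (a ^ k) ^ u = a := by
    rw [← pow_mul, aux_pow_mod ha, hu, pow_one]
  exact this ▸ pow_mem hmem u

private lemma aux_gen (n : ℕ) (hn : 3 ≤ n) {G : Type*} [Group G] {a b : G}
    (ha : a ^ 2 ^ (n-1) = 1) (hb : b ^ 2 = 1) (hconj : b * a * b⁻¹ = a ^ (1 + 2 ^ (n-2)))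
    (hgen : Subgroup.closure {a, b} = ⊤) :
    ∀ x y : G, x * y ≠ y * x → Subgroup.closure {x, y} = ⊤ := by
  haveI : NeZero (2 ^ (n-1)) := ⟨by positivity⟩
  have hM : (0:ℕ) < 2 ^ (n-1) := by positivity
  intro x y hxy
  obtain ⟨i, s, hs, rfl⟩ := aux_surj hM ha hb hconj hgen x
  obtain ⟨j, t, ht, rfl⟩ := aux_surj hM ha hb hconj hgen y
  have hxmem : a ^ i * b ^ s ∈ Subgroup.closure {a ^ i * b ^ s, a ^ j * b ^ t} :=
    Subgroup.subset_closure (Set.mem_insert _ _)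
  have hymem : a ^ j * b ^ t ∈ Subgroup.closure {a ^ i * b ^ s, a ^ j * b ^ t} :=
    Subgroup.subset_closure (Set.mem_insert_of_mem _ rfl)
  interval_cases s <;> interval_cases t
  · -- s = 0, t = 0
    exfalso
    apply hxy
    simp only [pow_zero, mul_one]
    rw [← pow_add, ← pow_add, add_comm]
  · -- s = 0, t = 1
    simp only [pow_zero, mul_one] at hxy hxmem
    by_cases h2 : 2 ∣ i
    · exact absurd (aux_center n hn ha hb hconj hgen i h2 (a ^ j * b ^ 1)).eq hxy
    · have hamem : a ∈ Subgroup.closure {a ^ i * b ^ 0, a ^ j * b ^ 1} := by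
        apply aux_odd_a n hn ha h2
        simpa using hxmem
      have hbmem : b ∈ Subgroup.closure {a ^ i * b ^ 0, a ^ j * b ^ 1} := by
        have h3 := Subgroup.mul_mem _ (Subgroup.inv_mem _ (Subgroup.pow_mem _ hamem j)) hymem
        simpa using h3
      exact aux_close hgen hamem hbmem
  · -- s = 1, t = 0
    simp only [pow_zero, mul_one] at hxy hymem
    by_cases h2 : 2 ∣ j
    · exact absurd (aux_center n hn ha hb hconj hgen j h2 (a ^ i * b ^ 1)).eq.symm hxy
    · have hamem : a ∈ Subgroup.closure {a ^ i * b ^ 1, a ^ j * b ^ 0} := by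
        apply aux_odd_a n hn ha h2
        simpa using hymem
      have hbmem : b ∈ Subgroup.closure {a ^ i * b ^ 1, a ^ j * b ^ 0} := by
        have h3 := Subgroup.mul_mem _ (Subgroup.inv_mem _ (Subgroup.pow_mem _ hamem i)) hxmem
        simpa using h3
      exact aux_close hgen hamem hbmem
  · -- s = 1, t = 1
    have hz : (a ^ i * b ^ 1) * (a ^ j * b ^ 1) = a ^ (i + (1 + 2 ^ (n-2)) * j) := by
      rw [aux_mul hconj, pow_one]
      norm_num [hb]
    have hz' : (a ^ j * b ^ 1) * (a ^ i * b ^ 1) = a ^ (j + (1 + 2 ^ (n-2)) * i) := by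
      rw [aux_mul hconj, pow_one]
      norm_num [hb]
    by_cases h2 : 2 ∣ (i + (1 + 2 ^ (n-2)) * j)
    · exfalso
      apply hxy
      rw [hz, hz']
      apply aux_pow_congr ha
      obtain ⟨q2, hq2e⟩ : 2 ∣ 2 ^ (n-2) := dvd_pow_self 2 (by omega)
      have hexp : i + (1 + 2 ^ (n-2)) * j = i + j + 2 * (q2 * j) := by rw [hq2e]; ring
      rw [hexp] at h2
      have hpar : i % 2 = j % 2 := by omega
      obtain ⟨c, hc⟩ : ∃ c : ℤ, (j:ℤ) = i + 2 * c := ⟨((j:ℤ) - i) / 2, by omega⟩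
      have hji : ((j:ℕ) : ZMod (2 ^ (n-1))) =
          ((i:ℕ) : ZMod (2 ^ (n-1))) + 2 * ((c:ℤ) : ZMod (2 ^ (n-1))) := by
        have := congrArg (Int.cast : ℤ → ZMod (2 ^ (n-1))) hc
        push_cast at this ⊢
        exact this
      have hqzero : (2:ZMod (2 ^ (n-1))) * 2 ^ (n-2) = 0 := by
        have h1 := congrArg (Nat.cast : ℕ → ZMod (2 ^ (n-1))) (aux_h2Q n hn)
        have h2 := ZMod.natCast_self (2 ^ (n-1))
        push_cast at h1 h2
        rw [h1, h2]
      push_cast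
      linear_combination ((2:ZMod (2 ^ (n-1)))^(n-2)) * hji + ((c:ℤ) : ZMod (2 ^ (n-1))) * hqzero
    · have hamem : a ∈ Subgroup.closure {a ^ i * b ^ 1, a ^ j * b ^ 1} := by
        apply aux_odd_a n hn ha h2
        rw [← hz]
        exact Subgroup.mul_mem _ hxmem hymem
      have hbmem : b ∈ Subgroup.closure {a ^ i * b ^ 1, a ^ j * b ^ 1} := by
        have h3 := Subgroup.mul_mem _ (Subgroup.inv_mem _ (Subgroup.pow_mem _ hamem i)) hxmem
        simpa using h3
      exact aux_close hgen hamem hbmem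

private lemma aux_h2Qh (n : ℕ) (hn : 3 ≤ n) : 2 * 2 ^ (n-3) = 2 ^ (n-2) := by
  rw [← pow_succ']; congr 1; omega

private lemma aux_pow_oneQ (n : ℕ) (hn : 3 ≤ n) {G : Type*} [Group G] {a b : G}
    (hb : b ^ 2 = 1) (hconj : b * a * b⁻¹ = a ^ (1 + 2 ^ (n-2))) (i s : ℕ) (hs : s < 2) :
    (a ^ i * b ^ s) ^ (1 + 2 ^ (n-2)) =
      a ^ ((1 + (1 + 2 ^ (n-2)) ^ s) * 2 ^ (n-3) * i + i) * b ^ s := by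
  interval_cases s
  · simp only [pow_zero, mul_one]
    rw [← pow_mul]
    congr 1
    have h := aux_h2Qh n hn
    calc i * (1 + 2 ^ (n-2)) = (2 * 2 ^ (n-3)) * i + i := by rw [h]; ring
      _ = (1 + 1) * 2 ^ (n-3) * i + i := by ring
  · have hx2 : (a ^ i * b ^ 1) ^ 2 = a ^ (i + (1 + 2 ^ (n-2)) * i) := by
      rw [pow_two, aux_mul hconj, pow_one]
      norm_num [hb]
    have hQ : (2:ℕ) ^ (n-2) = 2 * 2 ^ (n-3) := (aux_h2Qh n hn).symm
    calc (a ^ i * b ^ 1) ^ (1 + 2 ^ (n-2))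
        = ((a ^ i * b ^ 1) ^ 2) ^ (2 ^ (n-3)) * (a ^ i * b ^ 1) := by
          rw [add_comm 1 (2 ^ (n-2)), pow_succ]
          congr 1
          rw [hQ, pow_mul]
      _ = a ^ ((i + (1 + 2 ^ (n-2)) * i) * 2 ^ (n-3)) * (a ^ i * b ^ 1) := by
          rw [hx2, ← pow_mul]
      _ = a ^ ((1 + (1 + 2 ^ (n-2)) ^ 1) * 2 ^ (n-3) * i + i) * b ^ 1 := by
          rw [← mul_assoc, ← pow_add]
          congr 2
          ring

private lemma aux_aut_card (n : ℕ) (hn : 3 ≤ n) {G : Type*} [Group G] [Finite G] {a b : G}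
    (ha : a ^ 2 ^ (n-1) = 1) (hb : b ^ 2 = 1) (hconj : b * a * b⁻¹ = a ^ (1 + 2 ^ (n-2)))
    (hgen : Subgroup.closure {a, b} = ⊤) (hcard : Nat.card G = 2 ^ n) :
    Nat.card (MulAut G) = Nat.card {p : G × G // p.2 ^ 2 = 1 ∧
      p.2 * p.1 * p.2⁻¹ = p.1 ^ (1 + 2 ^ (n-2)) ∧ p.1 * p.2 ≠ p.2 * p.1} := by
  haveI : NeZero (2 ^ (n-1)) := ⟨by positivity⟩
  haveI : Fact (1 < 2 ^ (n-1)) := ⟨by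
    calc 1 < 2 ^ 1 := by norm_num
      _ ≤ 2 ^ (n-1) := Nat.pow_le_pow_right (by norm_num) (by omega)⟩
  have hbij := aux_bij n hn ha hb hconj hgen hcard
  have heq := aux_eq_iff n hn ha hb hbij
  have habne : a * b ≠ b * a := by
    intro h
    have h1 : b * a * b⁻¹ = a := by rw [← h]; group
    rw [hconj] at h1
    have h2 := (heq (1 + 2 ^ (n-2)) 0 1 0).mp (by simpa using h1)
    have h3 : ((2 ^ (n-2) : ℕ) : ZMod (2 ^ (n-1))) = 0 := by
      have := h2.1
      push_cast at this ⊢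
      linear_combination this
    rw [ZMod.natCast_eq_zero_iff] at h3
    have := Nat.le_of_dvd (by positivity) h3
    have hlt : (2:ℕ) ^ (n-2) < 2 ^ (n-1) := Nat.pow_lt_pow_right (by norm_num) (by omega)
    omega
  set E := Equiv.ofBijective _ hbij with hE
  have hElaw : ∀ p q : ZMod (2 ^ (n-1)) × ZMod 2,
      (E p) * (E q) = E (p.1 + ((1 + 2 ^ (n-2) : ℕ) : ZMod (2 ^ (n-1))) ^ (p.2.val) * q.1,
        p.2 + q.2) := by
    intro p q
    show (a ^ p.1.val * b ^ p.2.val) * (a ^ q.1.val * b ^ q.2.val)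
      = a ^ (_ : ZMod (2 ^ (n-1))).val * b ^ (_ : ZMod 2).val
    have hA : ((p.1.val + (1 + 2 ^ (n-2)) ^ (p.2.val) * q.1.val : ℕ) : ZMod (2 ^ (n-1)))
        = p.1 + ((1 + 2 ^ (n-2) : ℕ) : ZMod (2 ^ (n-1))) ^ (p.2.val) * q.1 := by
      push_cast [ZMod.natCast_zmod_val]
      ring
    have hB : ((p.2.val + q.2.val : ℕ) : ZMod 2) = p.2 + q.2 := by
      push_cast [ZMod.natCast_zmod_val]
      ring
    rw [aux_mul hconj, ← hA, ← hB, aux_pow_cast_val ha, aux_pow_cast_val hb]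
  have hEa : E (1, 0) = a := by
    show a ^ (1 : ZMod (2 ^ (n-1))).val * b ^ (0 : ZMod 2).val = a
    rw [ZMod.val_one, ZMod.val_zero]
    simp
  have hEb : E (0, 1) = b := by
    show a ^ (0 : ZMod (2 ^ (n-1))).val * b ^ (1 : ZMod 2).val = b
    rw [ZMod.val_one, ZMod.val_zero]
    simp
  refine Nat.card_congr (Equiv.ofBijective
    (fun φ => ⟨(φ a, φ b), ?_, ?_, ?_⟩) ⟨?_, ?_⟩)
  · show (φ b) ^ 2 = 1
    rw [← map_pow, hb, map_one]
  · show φ b * φ a * (φ b)⁻¹ = (φ a) ^ (1 + 2 ^ (n-2))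
    rw [← map_inv, ← map_mul, ← map_mul, hconj, map_pow]
  · show φ a * φ b ≠ φ b * φ a
    intro h
    rw [← map_mul, ← map_mul] at h
    exact habne (φ.injective h)
  · -- injective
    intro φ₁ φ₂ h
    have h1 : φ₁ a = φ₂ a := congrArg (Prod.fst ∘ Subtype.val) h
    have h2 : φ₁ b = φ₂ b := congrArg (Prod.snd ∘ Subtype.val) h
    apply MulEquiv.ext
    intro g
    obtain ⟨i, t, ht, rfl⟩ := aux_surj (by positivity) ha hb hconj hgen g
    rw [map_mul, map_mul, map_pow, map_pow, map_pow, map_pow, h1, h2]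
  · -- surjective
    rintro ⟨⟨x, y⟩, hy2, hrel, hnc⟩
    have htop := aux_gen n hn ha hb hconj hgen x y hnc
    have hx : x ^ 2 ^ (n-1) = 1 := aux_exp n hn ha hb hconj hgen x
    have hyrel : y * x * y⁻¹ = x ^ (1 + 2 ^ (n-2)) := hrel
    set ψ₀ : G → G := fun g => x ^ (E.symm g).1.val * y ^ (E.symm g).2.val with hψ₀
    have hmul : ∀ g h : G, ψ₀ (g * h) = ψ₀ g * ψ₀ h := by
      intro g h
      have hgh : g * h = E ((E.symm g).1 +
          ((1 + 2 ^ (n-2) : ℕ) : ZMod (2 ^ (n-1))) ^ ((E.symm g).2.val) * (E.symm h).1,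
          (E.symm g).2 + (E.symm h).2) := by
        conv_lhs => rw [← E.apply_symm_apply g, ← E.apply_symm_apply h]
        exact hElaw _ _
      rw [hψ₀]
      simp only [hgh, Equiv.symm_apply_apply]
      set p := E.symm g
      set q := E.symm h
      have hA : ((p.1.val + (1 + 2 ^ (n-2)) ^ (p.2.val) * q.1.val : ℕ) : ZMod (2 ^ (n-1)))
          = p.1 + ((1 + 2 ^ (n-2) : ℕ) : ZMod (2 ^ (n-1))) ^ (p.2.val) * q.1 := by
        push_cast [ZMod.natCast_zmod_val]
        ring
      have hB : ((p.2.val + q.2.val : ℕ) : ZMod 2) = p.2 + q.2 := by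
        push_cast [ZMod.natCast_zmod_val]
        ring
      rw [← hA, ← hB, aux_pow_cast_val hx, aux_pow_cast_val hy2, ← aux_mul hyrel]
    set ψ : G →* G := MonoidHom.mk' ψ₀ hmul with hψdef
    have hψa : ψ a = x := by
      have h1 : E.symm a = (1, 0) := by rw [← hEa, Equiv.symm_apply_apply]
      show ψ₀ a = x
      rw [hψ₀]
      simp only [h1]
      rw [ZMod.val_one, ZMod.val_zero]
      simp
    have hψb : ψ b = y := by
      have h1 : E.symm b = (0, 1) := by rw [← hEb, Equiv.symm_apply_apply]
      show ψ₀ b = y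
      rw [hψ₀]
      simp only [h1]
      rw [ZMod.val_one, ZMod.val_zero]
      simp
    have hsurj : Function.Surjective ψ := by
      rw [← MonoidHom.range_eq_top]
      rw [eq_top_iff, ← htop, Subgroup.closure_le]
      rintro g hg
      simp only [Set.mem_insert_iff, Set.mem_singleton_iff] at hg
      rcases hg with rfl | rfl
      · exact ⟨a, hψa⟩
      · exact ⟨b, hψb⟩
    have hinj : Function.Injective ψ := Finite.injective_iff_surjective.mpr hsurj
    refine ⟨MulEquiv.ofBijective ψ ⟨hinj, hsurj⟩, ?_⟩
    apply Subtype.ext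
    show (_, _) = (x, y)
    rw [Prod.mk.injEq]
    exact ⟨hψa, hψb⟩

private lemma aux_card_odd (m : ℕ) (hm : 1 ≤ m) :
    Nat.card {i : ZMod (2 ^ m) // Odd i.val} = 2 ^ (m - 1) := by
  haveI : NeZero (2 ^ m) := ⟨by positivity⟩
  haveI : NeZero (2 ^ (m - 1)) := ⟨by positivity⟩
  have hMK : 2 ^ m = 2 * 2 ^ (m - 1) := by rw [← pow_succ']; congr 1; omega
  have e : {i : ZMod (2 ^ m) // Odd i.val} ≃ ZMod (2 ^ (m - 1)) := by
    refine ⟨fun x => ((x.1.val / 2 : ℕ) : ZMod (2 ^ (m - 1))),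
      fun k => ⟨((2 * k.val + 1 : ℕ) : ZMod (2 ^ m)), ?_⟩, ?_, ?_⟩
    · have hk : k.val < 2 ^ (m - 1) := ZMod.val_lt k
      rw [ZMod.val_natCast_of_lt (by omega)]
      rw [Nat.odd_iff]; omega
    · rintro ⟨v, hv⟩
      have hvlt : v.val < 2 ^ m := ZMod.val_lt v
      have hv2 : v.val / 2 < 2 ^ (m - 1) := by omega
      apply Subtype.ext
      simp only
      rw [ZMod.val_natCast_of_lt hv2]
      have : 2 * (v.val / 2) + 1 = v.val := by
        rw [Nat.odd_iff] at hv; omega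
      rw [this, ZMod.natCast_zmod_val]
    · intro k
      have hk : k.val < 2 ^ (m - 1) := ZMod.val_lt k
      simp only
      rw [ZMod.val_natCast_of_lt (by omega)]
      have : (2 * k.val + 1) / 2 = k.val := by omega
      rw [this, ZMod.natCast_zmod_val]
  rw [Nat.card_congr e, Nat.card_zmod]

private lemma aux_card_ker (n : ℕ) (hn : 3 ≤ n) :
    Nat.card {j : ZMod (2 ^ (n - 1)) // 2 * j = 0} = 2 := by
  haveI : NeZero (2 ^ (n - 1)) := ⟨by positivity⟩
  have hQlt : (2:ℕ) ^ (n - 2) < 2 ^ (n - 1) := Nat.pow_lt_pow_right (by norm_num) (by omega)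
  have hQpos : (0:ℕ) < 2 ^ (n - 2) := by positivity
  have hM2Q : (2:ℕ) ^ (n - 1) = 2 * 2 ^ (n - 2) := (aux_h2Q n hn).symm
  have hiff : ∀ j : ZMod (2 ^ (n - 1)), 2 * j = 0 ↔
      j ∈ ({0, ((2 ^ (n - 2) : ℕ) : ZMod (2 ^ (n - 1)))} : Set (ZMod (2 ^ (n - 1)))) := by
    intro j
    simp only [Set.mem_insert_iff, Set.mem_singleton_iff]
    constructor
    · intro h
      have h1 : ((2 * j.val : ℕ) : ZMod (2 ^ (n - 1))) = 0 := by
        push_cast [ZMod.natCast_zmod_val]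
        linear_combination h
      rw [ZMod.natCast_eq_zero_iff] at h1
      obtain ⟨c, hc⟩ := h1
      have hjlt : j.val < 2 ^ (n - 1) := ZMod.val_lt j
      have hc2 : c < 2 := by
        rcases Nat.lt_or_ge c 2 with h' | h'
        · exact h'
        · exfalso
          have hle : 2 ^ (n - 1) * 2 ≤ 2 ^ (n - 1) * c := Nat.mul_le_mul_left _ h'
          omega
      interval_cases c
      · left
        rw [← ZMod.natCast_zmod_val j]
        have hj0 : j.val = 0 := by omega
        rw [hj0, Nat.cast_zero]
      · right
        rw [← ZMod.natCast_zmod_val j]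
        have hjq : j.val = 2 ^ (n - 2) := by omega
        rw [hjq]
    · have hzero : ((2 * 2 ^ (n - 2) : ℕ) : ZMod (2 ^ (n - 1))) = 0 := by
        rw [aux_h2Q n hn]; exact ZMod.natCast_self _
      rintro (rfl | rfl)
      · rw [mul_zero]
      · push_cast at hzero ⊢
        linear_combination hzero
  rw [Nat.card_congr (Equiv.subtypeEquivRight hiff), Nat.card_coe_set_eq,
    Set.ncard_pair]
  intro h
  have := congrArg ZMod.val h
  rw [ZMod.val_zero, ZMod.val_natCast_of_lt hQlt] at this
  omega

private def auxAP (n : ℕ) (r : (ZMod (2 ^ (n-1)) × ZMod 2) × (ZMod (2 ^ (n-1)) × ZMod 2)) :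
    Prop :=
  (r.2.1 + (1 + (2:ZMod (2 ^ (n-1))) ^ (n-2)) ^ (r.2.2.val) * r.2.1 = 0)
  ∧ (r.2.1 + (1 + (2:ZMod (2 ^ (n-1))) ^ (n-2)) ^ (r.2.2.val) * r.1.1
      = (1 + (1 + (2:ZMod (2 ^ (n-1))) ^ (n-2)) ^ (r.1.2.val)) * (2:ZMod (2 ^ (n-1))) ^ (n-3)
          * r.1.1 + r.1.1 + (1 + (2:ZMod (2 ^ (n-1))) ^ (n-2)) ^ (r.1.2.val) * r.2.1)
  ∧ (r.1.1 + (1 + (2:ZMod (2 ^ (n-1))) ^ (n-2)) ^ (r.1.2.val) * r.2.1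
      ≠ r.2.1 + (1 + (2:ZMod (2 ^ (n-1))) ^ (n-2)) ^ (r.2.2.val) * r.1.1)

private instance auxAPdec (n : ℕ) : DecidablePred (auxAP n) := fun r => by
  unfold auxAP; infer_instance

private lemma aux_red (n : ℕ) (hn : 3 ≤ n) {G : Type*} [Group G] [Finite G] {a b : G}
    (ha : a ^ 2 ^ (n-1) = 1) (hb : b ^ 2 = 1) (hconj : b * a * b⁻¹ = a ^ (1 + 2 ^ (n-2)))
    (hgen : Subgroup.closure {a, b} = ⊤) (hcard : Nat.card G = 2 ^ n) :
    Nat.card {p : G × G // p.2 ^ 2 = 1 ∧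
        p.2 * p.1 * p.2⁻¹ = p.1 ^ (1 + 2 ^ (n-2)) ∧ p.1 * p.2 ≠ p.2 * p.1}
      = Nat.card {r // auxAP n r} := by
  haveI : NeZero (2 ^ (n-1)) := ⟨by positivity⟩
  have hbij := aux_bij n hn ha hb hconj hgen hcard
  have heq := aux_eq_iff n hn ha hb hbij
  set E := Equiv.ofBijective _ hbij with hE
  have hiff : ∀ r : (ZMod (2 ^ (n-1)) × ZMod 2) × (ZMod (2 ^ (n-1)) × ZMod 2),
      auxAP n r ↔ ((E r.2) ^ 2 = 1 ∧
        E r.2 * E r.1 * (E r.2)⁻¹ = (E r.1) ^ (1 + 2 ^ (n-2)) ∧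
        E r.1 * E r.2 ≠ E r.2 * E r.1) := by
    rintro ⟨⟨i, s⟩, j, t⟩
    have h2t : ∀ u : ZMod 2, u + u = 0 := by decide
    have c1 : ((E (j, t)) ^ 2 = 1) ↔
        (j + (1 + (2:ZMod (2 ^ (n-1))) ^ (n-2)) ^ (t.val) * j = 0) := by
      show (a ^ j.val * b ^ t.val) ^ 2 = 1 ↔ _
      rw [pow_two, aux_mul hconj, show (1:G) = a ^ 0 * b ^ 0 by simp, heq]
      constructor
      · rintro ⟨h1, -⟩
        push_cast [ZMod.natCast_zmod_val] at h1
        linear_combination h1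
      · intro h1
        refine ⟨?_, ?_⟩
        · push_cast [ZMod.natCast_zmod_val]
          linear_combination h1
        · push_cast [ZMod.natCast_zmod_val]
          exact h2t t
    have c2 : (E (j, t) * E (i, s) * (E (j, t))⁻¹ = (E (i, s)) ^ (1 + 2 ^ (n-2))) ↔
        (j + (1 + (2:ZMod (2 ^ (n-1))) ^ (n-2)) ^ (t.val) * i
          = (1 + (1 + (2:ZMod (2 ^ (n-1))) ^ (n-2)) ^ (s.val)) * (2:ZMod (2 ^ (n-1))) ^ (n-3)
              * i + i + (1 + (2:ZMod (2 ^ (n-1))) ^ (n-2)) ^ (s.val) * j) := by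
      rw [mul_inv_eq_iff_eq_mul]
      show (a ^ j.val * b ^ t.val) * (a ^ i.val * b ^ s.val)
        = (a ^ i.val * b ^ s.val) ^ (1 + 2 ^ (n-2)) * (a ^ j.val * b ^ t.val) ↔ _
      rw [aux_mul hconj, aux_pow_oneQ n hn hb hconj i.val s.val (ZMod.val_lt s),
        aux_mul hconj, heq]
      constructor
      · rintro ⟨h1, -⟩
        push_cast [ZMod.natCast_zmod_val] at h1
        linear_combination h1
      · intro h1
        refine ⟨?_, ?_⟩
        · push_cast [ZMod.natCast_zmod_val]
          linear_combination h1
        · push_cast [ZMod.natCast_zmod_val]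
          ring
    have c3 : (E (i, s) * E (j, t) ≠ E (j, t) * E (i, s)) ↔
        (i + (1 + (2:ZMod (2 ^ (n-1))) ^ (n-2)) ^ (s.val) * j
          ≠ j + (1 + (2:ZMod (2 ^ (n-1))) ^ (n-2)) ^ (t.val) * i) := by
      apply not_congr
      show (a ^ i.val * b ^ s.val) * (a ^ j.val * b ^ t.val)
        = (a ^ j.val * b ^ t.val) * (a ^ i.val * b ^ s.val) ↔ _
      rw [aux_mul hconj, aux_mul hconj, heq]
      constructor
      · rintro ⟨h1, -⟩
        push_cast [ZMod.natCast_zmod_val] at h1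
        linear_combination h1
      · intro h1
        refine ⟨?_, ?_⟩
        · push_cast [ZMod.natCast_zmod_val]
          linear_combination h1
        · push_cast [ZMod.natCast_zmod_val]
          ring
    exact and_congr c1.symm (and_congr c2.symm c3.symm)
  exact (Nat.card_congr ((Equiv.prodCongr E E).subtypeEquiv hiff)).symm

private lemma aux_count3 : Nat.card {r // auxAP 3 r} = 2 ^ 3 := by
  rw [Nat.card_eq_fintype_card]
  decide

private lemma aux_count4 (n : ℕ) (hn : 4 ≤ n) : Nat.card {r // auxAP n r} = 2 ^ n := by
  haveI : NeZero (2 ^ (n-1)) := ⟨by positivity⟩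
  haveI : Fact ((1:ℕ) < 2) := ⟨one_lt_two⟩
  have hcast : ∀ k : ℕ, 2 ^ (n-1) ∣ k → ((k:ℕ) : ZMod (2 ^ (n-1))) = 0 := fun k hk =>
    (ZMod.natCast_eq_zero_iff _ _).mpr hk
  have f5 : (2:ZMod (2 ^ (n-1))) * (2:ZMod (2 ^ (n-1))) ^ (n-3) = (2:ZMod (2 ^ (n-1))) ^ (n-2) := by
    have h := congrArg (Nat.cast : ℕ → ZMod (2 ^ (n-1))) (aux_h2Qh n (by omega))
    push_cast at h
    exact h
  have f4 : (2:ZMod (2 ^ (n-1))) ^ (n-2) * (2:ZMod (2 ^ (n-1))) ^ (n-3) = 0 := by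
    have h : ((2 ^ (n-2) * 2 ^ (n-3) : ℕ) : ZMod (2 ^ (n-1))) = 0 := by
      apply hcast
      rw [← pow_add]
      exact pow_dvd_pow 2 (by omega)
    push_cast at h
    exact h
  have f8 : ∀ j : ZMod (2 ^ (n-1)), 2 * j = 0 → (2:ZMod (2 ^ (n-1))) ^ (n-2) * j = 0 := by
    intro j h
    linear_combination ((2:ZMod (2 ^ (n-1))) ^ (n-3)) * h + (-j) * f5
  have f6 : ∀ i : ZMod (2 ^ (n-1)), ((2:ZMod (2 ^ (n-1))) ^ (n-2) * i = 0) ↔ ¬ Odd i.val := by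
    intro i
    have h1 : ((2 ^ (n-2) * i.val : ℕ) : ZMod (2 ^ (n-1))) = (2:ZMod (2 ^ (n-1))) ^ (n-2) * i := by
      push_cast [ZMod.natCast_zmod_val]; ring
    rw [← h1, ZMod.natCast_eq_zero_iff]
    have hM2Q : (2:ℕ) ^ (n-1) = 2 * 2 ^ (n-2) := (aux_h2Q n (by omega)).symm
    constructor
    · rintro ⟨c, hc⟩
      have hc' : 2 ^ (n-2) * i.val = 2 ^ (n-2) * (2 * c) := by rw [hc, hM2Q]; ring
      have hi : i.val = 2 * c := Nat.eq_of_mul_eq_mul_left (by positivity) hc'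
      rw [Nat.odd_iff]; omega
    · intro h
      rw [Nat.odd_iff] at h
      have h2 : 2 ∣ i.val := by omega
      obtain ⟨c, hc⟩ := h2
      exact ⟨c, by rw [hc, hM2Q]; ring⟩
  have f7 : IsUnit (1 + (2:ZMod (2 ^ (n-1))) ^ (n-3)) := by
    have h1 : ((1 + 2 ^ (n-3) : ℕ) : ZMod (2 ^ (n-1))) = 1 + (2:ZMod (2 ^ (n-1))) ^ (n-3) := by
      push_cast; ring
    rw [← h1, ZMod.isUnit_iff_coprime]
    apply Nat.Coprime.pow_right
    apply Nat.coprime_two_right.mpr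
    have h2 : 2 ∣ 2 ^ (n-3) := dvd_pow_self 2 (by omega)
    rw [Nat.odd_iff]; omega
  have f9 : ∀ j : ZMod (2 ^ (n-1)),
      (j + (1 + (2:ZMod (2 ^ (n-1))) ^ (n-2)) * j = 0) ↔ 2 * j = 0 := by
    intro j
    constructor
    · intro h
      have h' : (1 + (2:ZMod (2 ^ (n-1))) ^ (n-3)) * (2 * j) = 0 := by
        linear_combination h + j * f5
      exact (f7.mul_right_eq_zero).mp h'
    · intro h
      linear_combination (1 + (2:ZMod (2 ^ (n-1))) ^ (n-3)) * h + (-j) * f5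
  have hAP2 : ∀ r, auxAP n r ↔ (Odd r.1.1.val ∧ (2 * r.2.1 = 0 ∧ r.2.2 = 1)) := by
    rintro ⟨⟨i, s⟩, j, t⟩
    unfold auxAP
    dsimp only
    have hsv : s.val = 0 ∨ s.val = 1 := by have := ZMod.val_lt s; omega
    have htv : t.val = 0 ∨ t.val = 1 := by have := ZMod.val_lt t; omega
    have ht1 : t.val = 1 → t = 1 := fun h => by
      rw [← ZMod.natCast_zmod_val t, h, Nat.cast_one]
    have ht0 : t.val = 0 → t ≠ 1 := fun h hcon => by
      rw [hcon, ZMod.val_one] at h; omega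
    rcases hsv with hs | hs <;> rcases htv with ht | ht
    · -- s = 0, t = 0
      rw [hs, ht]
      simp only [pow_zero, one_mul]
      constructor
      · rintro ⟨-, -, h3⟩
        exact absurd (by ring) h3
      · rintro ⟨-, -, h⟩
        exact absurd h (ht0 ht)
    · -- s = 0, t = 1
      rw [hs, ht]
      simp only [pow_zero, pow_one, one_mul]
      constructor
      · rintro ⟨h1, h2, h3⟩
        refine ⟨?_, (f9 j).mp h1, ht1 ht⟩
        by_contra hodd
        apply h3
        linear_combination (-1 : ZMod (2 ^ (n-1))) * ((f6 i).mpr hodd)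
      · rintro ⟨hodd, h2j, -⟩
        refine ⟨(f9 j).mpr h2j, ?_, ?_⟩
        · linear_combination (-i) * f5
        · intro hcon
          exact (f6 i).mp (by linear_combination (-1 : ZMod (2 ^ (n-1))) * hcon) hodd
    · -- s = 1, t = 0
      rw [hs, ht]
      simp only [pow_zero, pow_one, one_mul]
      constructor
      · rintro ⟨h1, -, h3⟩
        exfalso
        have h2j : 2 * j = 0 := by linear_combination h1
        apply h3
        linear_combination f8 j h2j
      · rintro ⟨-, -, h⟩
        exact absurd h (ht0 ht)
    · -- s = 1, t = 1
      rw [hs, ht]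
      simp only [pow_one]
      constructor
      · rintro ⟨h1, h2, h3⟩
        have h2j := (f9 j).mp h1
        have hqj := f8 j h2j
        refine ⟨?_, h2j, ht1 ht⟩
        by_contra hodd
        apply h3
        linear_combination hqj - ((f6 i).mpr hodd)
      · rintro ⟨hodd, h2j, -⟩
        have hqj := f8 j h2j
        refine ⟨(f9 j).mpr h2j, ?_, ?_⟩
        · linear_combination (-i) * f5 + (-i) * f4 + (-1 : ZMod (2 ^ (n-1))) * hqj
        · intro hcon
          exact (f6 i).mp (by linear_combination (-1 : ZMod (2 ^ (n-1))) * hcon + hqj) hodd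
  rw [Nat.card_congr (Equiv.subtypeEquivRight hAP2)]
  rw [Nat.card_congr (Equiv.subtypeProdEquivProd
    (p := fun x : ZMod (2 ^ (n-1)) × ZMod 2 => Odd x.1.val)
    (q := fun x : ZMod (2 ^ (n-1)) × ZMod 2 => 2 * x.1 = 0 ∧ x.2 = 1))]
  rw [Nat.card_prod]
  have e1 : {x : ZMod (2 ^ (n-1)) × ZMod 2 // Odd x.1.val} ≃
      {i : ZMod (2 ^ (n-1)) // Odd i.val} × ZMod 2 :=
    ⟨fun x => (⟨x.1.1, x.2⟩, x.1.2), fun y => ⟨(y.1.1, y.2), y.1.2⟩,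
      fun x => rfl, fun y => rfl⟩
  rw [Nat.card_congr e1, Nat.card_prod, aux_card_odd (n-1) (by omega), Nat.card_zmod]
  rw [Nat.card_congr (Equiv.subtypeProdEquivProd
    (p := fun j : ZMod (2 ^ (n-1)) => 2 * j = 0)
    (q := fun t : ZMod 2 => t = 1)), Nat.card_prod, aux_card_ker n (by omega)]
  haveI : Unique {t : ZMod 2 // t = 1} := ⟨⟨⟨1, rfl⟩⟩, by rintro ⟨t, rfl⟩; rfl⟩
  rw [Nat.card_unique, mul_one]
  have h1 : n - 1 - 1 = n - 2 := by omega
  rw [h1]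
  calc 2 ^ (n-2) * 2 * 2 = 2 ^ (n-2) * 2 ^ 2 := by ring
    _ = 2 ^ n := by rw [← pow_add]; congr 1; omega

/-- For `n ≥ 3`, the modular group of order `2 ^ n`, presented as
`⟨a, b : a^(2^(n-1)) = b^2 = 1, a^b = a^(1 + 2^(n-2))⟩`, has automorphism group of
order `2 ^ n = |G|`. -/
theorem card_aut_modular_two_group (n : ℕ) (hn : 3 ≤ n) (G : Type*) [Group G] [Finite G]
    (a b : G) (ha : a ^ 2 ^ (n - 1) = 1) (hb : b ^ 2 = 1)
    (hconj : b * a * b⁻¹ = a ^ (1 + 2 ^ (n - 2)))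
    (hgen : Subgroup.closure {a, b} = ⊤) (hcard : Nat.card G = 2 ^ n) :
    Nat.card (MulAut G) = 2 ^ n := by
  rw [aux_aut_card n hn ha hb hconj hgen hcard, aux_red n hn ha hb hconj hgen hcard]
  rcases Nat.lt_or_ge n 4 with h4 | h4
  · have h3 : n = 3 := by omega
    subst h3
    exact aux_count3
  · exact aux_count4 n h4
end
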